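/- arXiv:2202.02356 — 13 statements merged into one kernel-verified Lean document; each statement's English description precedes it below -/
import Mathlib

section
/- Let K be an infinite field, let m, n, t be natural numbers with 1 ≤ t ≤ n, and let χ be an m×n zero-nonzero pattern such that every row of χ has at least t nonzero positions. Then there exists an m×n matrix A with entries in K whose zero-nonzero pattern is χ (i.e., A i j ≠ 0 if and only if χ i j) and whose rank is at most n − t + 1. -/
open Polynomial Finset

/-- Given an infinite field `K` and an `m × n` zero-nonzero pattern `χ` each of whose rows has
at least `t` nonzero positions (`1 ≤ t ≤ n`), there is a matrix over `K` with zero-nonzero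
pattern `χ` and rank at most `n - t + 1`. -/
theorem zero_nonzero_pattern_low_rank_lift
    (K : Type*) [Field K] [Infinite K] (m n t : ℕ) (ht1 : 1 ≤ t) (htn : t ≤ n)
    (χ : Fin m → Fin n → Prop) (hrow : ∀ i, t ≤ {j | χ i j}.ncard) :
    ∃ A : Matrix (Fin m) (Fin n) K,
      (∀ i j, A i j ≠ 0 ↔ χ i j) ∧ A.rank ≤ n - t + 1 := by
  classical
  -- distinct points in K
  obtain ⟨x, hx⟩ : ∃ x : Fin n → K, Function.Injective x :=
    ⟨fun j => (Infinite.natEmbedding K) j, fun a b h => by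
      have := (Infinite.natEmbedding K).injective h
      exact Fin.val_injective this⟩
  -- zero sets
  set Z : Fin m → Finset (Fin n) := fun i => Finset.univ.filter (fun j => ¬ χ i j) with hZ
  have hZcard : ∀ i, (Z i).card ≤ n - t := by
    intro i
    have h1 : ({j | χ i j} : Set (Fin n)).ncard = (Finset.univ.filter (fun j => χ i j)).card := by
      rw [Set.ncard_eq_toFinset_card']
      congr 1
      ext j; simp
    have h2 : (Finset.univ.filter (fun j => χ i j)).card + (Z i).card = n := by
      rw [hZ]
      simpa using Finset.card_filter_add_card_filter_not (s := (Finset.univ : Finset (Fin n))) (p := fun j => χ i j)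
    have h3 := hrow i
    omega
  set p : Fin m → K[X] := fun i => ∏ j ∈ Z i, (X - C (x j)) with hp
  have hpdeg : ∀ i, (p i).natDegree ≤ n - t := by
    intro i
    calc (p i).natDegree ≤ ∑ j ∈ Z i, (X - C (x j)).natDegree :=
          natDegree_prod_le (Z i) (fun j => X - C (x j))
      _ ≤ (Z i).card := by simp [natDegree_X_sub_C]
      _ ≤ n - t := hZcard i
  set B : Matrix (Fin m) (Fin (n - t + 1)) K := fun i k => (p i).coeff k with hB
  set V : Matrix (Fin (n - t + 1)) (Fin n) K := fun k j => x j ^ (k : ℕ) with hV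
  refine ⟨B * V, ?_, ?_⟩
  · intro i j
    have hmul : (B * V) i j = (p i).eval (x j) := by
      rw [Matrix.mul_apply, hB, hV]
      rw [Polynomial.eval_eq_sum_range' (n := n - t + 1) (Nat.lt_succ_of_le (hpdeg i))]
      rw [Fin.sum_univ_eq_sum_range (fun k => (p i).coeff k * x j ^ k)]
    rw [hmul, hp]
    simp only [eval_prod, eval_sub, eval_X, eval_C]
    rw [Finset.prod_ne_zero_iff]
    constructor
    · intro h
      by_contra hχ
      have hj : j ∈ Z i := by simp [hZ, hχ]
      exact (h j hj) (by ring)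
    · intro hχ k hk
      have : ¬ χ i k := by simpa [hZ] using hk
      intro heq
      have hjk : j = k := hx (sub_eq_zero.mp heq)
      exact this (hjk ▸ hχ)
  · calc (B * V).rank ≤ B.rank := Matrix.rank_mul_le_left B V
      _ ≤ Fintype.card (Fin (n - t + 1)) := Matrix.rank_le_card_width B
      _ = n - t + 1 := by simp
end

section
/- Let χ : Fin m → Fin n → ℝ be a full sign pattern, i.e., every entry of χ is 1 or −1, and suppose that every row of χ has at most k sign changes, i.e., for each i the number of indices j with 0 ≤ j < n−1 and χ i j ≠ χ i (j+1) is at most k. Then there exists a matrix A : Matrix (Fin m) (Fin n) ℝ such that A i j has the same sign as χ i j for all i, j (that is, A i j * χ i j > 0), and rank A ≤ k + 1. -/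
open Polynomial Finset Fin.NatCast

/-- (Alon–Spencer) If `χ` is a full `m × n` sign pattern (every entry `1` or `-1`) with at most
`k` sign changes in each row, then there is a real matrix with sign pattern `χ` and rank at
most `k + 1`. -/
theorem full_sign_pattern_low_rank_lift
    (m n k : ℕ) (χ : Fin m → Fin n → ℝ)
    (hfull : ∀ i j, χ i j = 1 ∨ χ i j = -1)
    (hrow : ∀ i,
      {p : Fin n × Fin n | (p.2 : ℕ) = (p.1 : ℕ) + 1 ∧ χ i p.1 ≠ χ i p.2}.ncard ≤ k) :
    ∃ A : Matrix (Fin m) (Fin n) ℝ,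
      (∀ i j, A i j * χ i j > 0) ∧ A.rank ≤ k + 1 := by
  classical
  rcases Nat.eq_zero_or_pos n with hn | hn
  · subst hn
    exact ⟨0, fun i j => j.elim0, by simp⟩
  haveI : NeZero n := ⟨hn.ne'⟩
  -- extended sign function
  set c : Fin m → ℕ → ℝ := fun i j => if h : j < n then χ i ⟨j, h⟩ else 0 with hc
  -- set of sign-change positions in row i
  set Ch : Fin m → Finset ℕ :=
    fun i => (Finset.range (n-1)).filter (fun j => c i j ≠ c i (j+1)) with hCh
  -- card bound
  have hcard : ∀ i, (Ch i).card ≤ k := by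
    intro i
    refine le_trans ?_ (hrow i)
    rw [Set.ncard_eq_toFinset_card' _]
    refine Finset.card_le_card_of_injOn
      (fun j : ℕ => (((j : Fin n), ((j+1 : ℕ) : Fin n)) : Fin n × Fin n)) ?_ ?_
    · intro j hj
      simp only [hCh, Finset.mem_coe, Finset.mem_filter, Finset.mem_range] at hj
      obtain ⟨hj1, hj2⟩ := hj
      have h1 : j < n := lt_of_lt_of_le hj1 (Nat.sub_le _ _)
      have h2 : j + 1 < n := by omega
      simp only [Finset.mem_coe, Set.mem_toFinset, Set.mem_setOf_eq]
      rw [Fin.val_cast_of_lt h1, Fin.val_cast_of_lt h2]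
      refine ⟨rfl, ?_⟩
      have e1 : ((j : Fin n)) = ⟨j, h1⟩ := Fin.ext (Fin.val_cast_of_lt h1)
      have e2 : (((j+1:ℕ) : Fin n)) = ⟨j+1, h2⟩ := Fin.ext (Fin.val_cast_of_lt h2)
      rw [e1, e2]
      simpa [hc, h1, h2] using hj2
    · intro a ha b hb hab
      have ha' : a < n := by
        simp only [hCh, Finset.coe_filter, Set.mem_setOf_eq, Finset.mem_coe,
          Finset.mem_filter, Finset.mem_range] at ha; omega
      have hb' : b < n := by
        simp only [hCh, Finset.coe_filter, Set.mem_setOf_eq, Finset.mem_coe,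
          Finset.mem_filter, Finset.mem_range] at hb; omega
      have := congrArg (fun p => (p.1 : ℕ)) hab
      simpa [Fin.val_cast_of_lt ha', Fin.val_cast_of_lt hb'] using this
  -- the row polynomials
  set P : Fin m → Polynomial ℝ := fun i =>
    Polynomial.C (χ i ⟨0, hn⟩ * (-1)^(Ch i).card) *
      ∏ r ∈ Ch i, (Polynomial.X - Polynomial.C ((r : ℝ) + 1/2)) with hP
  have hdeg : ∀ i, (P i).natDegree ≤ k := by
    intro i
    refine le_trans (Polynomial.natDegree_mul_le) ?_
    simp only [Polynomial.natDegree_C, zero_add]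
    refine le_trans (Polynomial.natDegree_prod_le _ _) ?_
    calc ∑ r ∈ Ch i, (Polynomial.X - Polynomial.C ((r : ℝ) + 1/2)).natDegree
        = (Ch i).card := by
          rw [Finset.sum_congr rfl fun r _ => Polynomial.natDegree_X_sub_C _,
            Finset.sum_const, smul_eq_mul, mul_one]
      _ ≤ k := hcard i
  -- sign recursion along a row
  have key : ∀ i (j : ℕ) (hj : j < n),
      χ i ⟨j, hj⟩ = χ i ⟨0, hn⟩ * (-1)^(((Ch i).filter (fun r => r < j)).card) := by
    intro i j
    induction j with
    | zero => intro hj; simp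
    | succ j ih =>
      intro hj
      have hjn : j < n := by omega
      have hstep : ((Ch i).filter (fun r => r < j + 1)) =
          if j ∈ Ch i then insert j ((Ch i).filter (fun r => r < j))
          else (Ch i).filter (fun r => r < j) := by
        split_ifs with hjC
        · ext r
          simp only [mem_filter, mem_insert]
          constructor
          · rintro ⟨hr, hr'⟩
            rcases Nat.lt_succ_iff_lt_or_eq.mp hr' with h | h
            · exact Or.inr ⟨hr, h⟩
            · exact Or.inl h
          · rintro (rfl | ⟨hr, hr'⟩)
            · exact ⟨hjC, Nat.lt_succ_self _⟩
            · exact ⟨hr, hr'.trans (Nat.lt_succ_self _)⟩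
        · ext r
          simp only [mem_filter]
          constructor
          · rintro ⟨hr, hr'⟩
            rcases Nat.lt_succ_iff_lt_or_eq.mp hr' with h | h
            · exact ⟨hr, h⟩
            · exact absurd (h ▸ hr) hjC
          · rintro ⟨hr, hr'⟩
            exact ⟨hr, hr'.trans (Nat.lt_succ_self _)⟩
      by_cases hjC : j ∈ Ch i
      · have hne : χ i ⟨j, hjn⟩ ≠ χ i ⟨j+1, hj⟩ := by
          simp only [hCh, mem_filter, mem_range] at hjC
          simpa [hc, hjn, hj] using hjC.2
        have hflip : χ i ⟨j+1, hj⟩ = - χ i ⟨j, hjn⟩ := by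
          rcases hfull i ⟨j, hjn⟩ with h1 | h1 <;> rcases hfull i ⟨j+1, hj⟩ with h2 | h2 <;>
            simp [h1, h2] at hne ⊢
        rw [hflip, ih hjn, hstep, if_pos hjC,
          Finset.card_insert_of_notMem (by simp)]
        ring
      · have heq : χ i ⟨j, hjn⟩ = χ i ⟨j+1, hj⟩ := by
          by_contra hne
          apply hjC
          simp only [hCh, mem_filter, mem_range]
          exact ⟨by omega, by simpa [hc, hjn, hj] using hne⟩
        rw [← heq, ih hjn, hstep, if_neg hjC]
  -- sign correctness
  have hsign : ∀ i (j : Fin n), 0 < (P i).eval (((j:ℕ):ℝ)) * χ i j := by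
    intro i j
    set x : ℝ := ((j:ℕ):ℝ) with hx
    have hpos : ∀ r : ℕ, (0:ℝ) < |x - ((r:ℝ)+1/2)| := by
      intro r
      rw [abs_pos]
      intro h
      have h2 : ((2*(j:ℕ):ℕ):ℝ) = ((2*r+1:ℕ):ℝ) := by push_cast; linarith
      have := Nat.cast_injective (R := ℝ) h2
      omega
    have hfac : ∀ r ∈ Ch i, x - ((r:ℝ)+1/2) =
        (if r < (j:ℕ) then (1:ℝ) else -1) * |x - ((r:ℝ)+1/2)| := by
      intro r _
      split_ifs with h
      · rw [one_mul, abs_of_pos]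
        have : (r:ℝ) + 1 ≤ x := by rw [hx]; exact_mod_cast Nat.succ_le_of_lt h
        linarith
      · rw [neg_one_mul, abs_of_nonpos, neg_neg]
        have : x ≤ (r:ℝ) := by rw [hx]; exact_mod_cast Nat.not_lt.mp h
        linarith
    set f := (((Ch i).filter (fun r => r < (j:ℕ))).card) with hf
    set g := (((Ch i).filter (fun r => ¬ r < (j:ℕ))).card) with hg
    set Q : ℝ := ∏ r ∈ Ch i, |x - ((r:ℝ)+1/2)| with hQ
    have hQpos : 0 < Q := Finset.prod_pos (fun r _ => hpos r)
    have hprodeq : ∏ r ∈ Ch i, (x - ((r:ℝ)+1/2)) = (-1)^g * Q := by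
      rw [Finset.prod_congr rfl hfac, Finset.prod_mul_distrib, Finset.prod_ite,
        Finset.prod_const_one, one_mul, Finset.prod_const]
    have heval : (P i).eval x =
        χ i ⟨0, hn⟩ * (-1)^(Ch i).card * ((-1)^g * Q) := by
      rw [hP]
      simp only [Polynomial.eval_mul, Polynomial.eval_C, Polynomial.eval_prod,
        Polynomial.eval_sub, Polynomial.eval_X]
      rw [hprodeq]
    have hχj : χ i j = χ i ⟨0, hn⟩ * (-1)^f := by
      have := key i (j:ℕ) j.isLt
      simpa using this
    have hfg : f + g = (Ch i).card :=
      Finset.card_filter_add_card_filter_not _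
    have hχ0 : χ i ⟨0, hn⟩ * χ i ⟨0, hn⟩ = 1 := by
      rcases hfull i ⟨0, hn⟩ with h | h <;> rw [h] <;> norm_num
    have hpow : ((-1:ℝ))^(Ch i).card * (-1)^g * (-1)^f = 1 := by
      rw [← pow_add, ← pow_add]
      have h2 : (Ch i).card + g + f = 2 * (Ch i).card := by omega
      rw [h2, pow_mul]
      norm_num
    have hfinal : (P i).eval x * χ i j = Q := by
      rw [heval, hχj]
      calc χ i ⟨0, hn⟩ * (-1)^(Ch i).card * ((-1)^g * Q) * (χ i ⟨0, hn⟩ * (-1)^f)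
          = (χ i ⟨0, hn⟩ * χ i ⟨0, hn⟩) * ((-1)^(Ch i).card * (-1)^g * (-1)^f) * Q := by
            ring
        _ = Q := by rw [hχ0, hpow]; ring
    rw [hfinal]
    exact hQpos
  -- the matrix and its factorization
  refine ⟨fun i j => (P i).eval (((j:ℕ):ℝ)), fun i j => hsign i j, ?_⟩
  set B : Matrix (Fin m) (Fin (k+1)) ℝ := fun i t => (P i).coeff t with hB
  set W : Matrix (Fin (k+1)) (Fin n) ℝ := fun t j => ((j:ℕ):ℝ)^(t:ℕ) with hW
  have hfact : (fun i j => (P i).eval (((j:ℕ):ℝ)) : Matrix (Fin m) (Fin n) ℝ) = B * W := by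
    ext i j
    rw [Matrix.mul_apply]
    rw [Polynomial.eval_eq_sum_range' (Nat.lt_succ_of_le (hdeg i))]
    rw [← Fin.sum_univ_eq_sum_range]
  rw [hfact]
  refine le_trans (Matrix.rank_mul_le_right B W) ?_
  refine le_trans (Matrix.rank_le_card_height W) ?_
  simp
end

section
/- Let χ : Fin m → Fin n → SignType be a sign pattern and let k ≥ 1. Suppose that for every row i of χ the generalized number of sign changes σ(χ i) is strictly less than k. Then there exists a matrix A : Matrix (Fin m) (Fin n) ℝ such that SignType.sign (A i j) = χ i j for all i, j, and rank A ≤ k. -/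
/-- The number of sign changes of a vector `X`, i.e. the number of consecutive pairs of
entries at which `X` takes different values. -/
noncomputable def signChanges {n : ℕ} (X : Fin n → ℝ) : ℕ :=
  {p : Fin n × Fin n | (p.2 : ℕ) = (p.1 : ℕ) + 1 ∧ X p.1 ≠ X p.2}.ncard

/-- `X ∈ {1, -1}ⁿ` is a full completion of the sign vector `V` if it agrees with `V` at all
nonzero positions of `V`. -/
def IsFullCompletion {n : ℕ} (V : Fin n → SignType) (X : Fin n → ℝ) : Prop :=
  (∀ j, X j = 1 ∨ X j = -1) ∧ (∀ j, V j = 1 → X j = 1) ∧ (∀ j, V j = -1 → X j = -1)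

/-- The generalized number of sign changes of a sign vector `V`: the maximal number of
sign changes of a full completion of `V`. -/
noncomputable def genSignChanges {n : ℕ} (V : Fin n → SignType) : ℕ :=
  sSup {c | ∃ X : Fin n → ℝ, IsFullCompletion V X ∧ signChanges X = c}

namespace SPLRAux
open Finset Polynomial

variable (n : ℕ) (W : ℕ → SignType)

/-- indices of nonzero entries -/
def NZ : Finset ℕ := (Finset.range n).filter (fun t => W t ≠ 0)

/-- nonzero indices at or after `j` -/
def RS (j : ℕ) : Finset ℕ := (NZ n W).filter (fun t => j ≤ t)

/-- reference nonzero index for `j` -/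
noncomputable def ref (j : ℕ) : ℕ :=
  if h : (RS n W j).Nonempty then (RS n W j).min' h
  else if h2 : (NZ n W).Nonempty then (NZ n W).max' h2 else 0

/-- explicit full completion -/
noncomputable def Xc (j : ℕ) : ℝ :=
  (-1 : ℝ) ^ (j + ref n W j) * ((W (ref n W j) : ℝ))

open scoped Classical in
/-- the set of sign-change positions of the completion -/
noncomputable def SF : Finset ℕ :=
  (Finset.range (n - 1)).filter (fun l => Xc n W l ≠ Xc n W (l + 1))

/-- root location associated to a sign change at `(l, l+1)` -/
noncomputable def rho (l : ℕ) : ℝ :=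
  if W (l + 1) = 0 ∧ RS n W (l + 1) = ∅ then ((l + 1 : ℕ) : ℝ)
  else if W l = 0 then (l : ℝ) else (l : ℝ) + 1 / 2

lemma mem_NZ {t : ℕ} : t ∈ NZ n W ↔ t < n ∧ W t ≠ 0 := by
  simp [NZ]

lemma mem_RS {j t : ℕ} : t ∈ RS n W j ↔ (t < n ∧ W t ≠ 0) ∧ j ≤ t := by
  simp [RS, mem_NZ]

lemma ref_mem (hN : (NZ n W).Nonempty) (j : ℕ) : ref n W j ∈ NZ n W := by
  unfold ref
  split
  · rename_i h
    exact Finset.filter_subset _ _ ((RS n W j).min'_mem h)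
  · exact (NZ n W).max'_mem hN

lemma ref_eq_self {j : ℕ} (hj : j < n) (hW : W j ≠ 0) : ref n W j = j := by
  have hjR : j ∈ RS n W j := (mem_RS n W).2 ⟨⟨hj, hW⟩, le_refl j⟩
  have hne : (RS n W j).Nonempty := ⟨j, hjR⟩
  unfold ref
  rw [dif_pos hne]
  refine le_antisymm (Finset.min'_le _ _ hjR) (Finset.le_min' _ _ _ ?_)
  intro y hy
  exact ((mem_RS n W).1 hy).2

lemma Xc_eq_cast {j : ℕ} (hj : j < n) (hW : W j ≠ 0) : Xc n W j = (W j : ℝ) := by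
  unfold Xc
  rw [ref_eq_self n W hj hW, Even.neg_one_pow ⟨j, rfl⟩, one_mul]

lemma Xc_pm (hN : (NZ n W).Nonempty) (j : ℕ) : Xc n W j = 1 ∨ Xc n W j = -1 := by
  have hmem := ref_mem n W hN j
  have hW : W (ref n W j) ≠ 0 := ((mem_NZ n W).1 hmem).2
  have h1 : (-1 : ℝ) ^ (j + ref n W j) = 1 ∨ (-1 : ℝ) ^ (j + ref n W j) = -1 :=
    neg_one_pow_eq_or _ _
  have h2 : ((W (ref n W j) : ℝ)) = 1 ∨ ((W (ref n W j) : ℝ)) = -1 := by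
    rcases hc : (W (ref n W j)) with _ | _ | _
    · rw [hc] at hW; simp at hW
    · right; exact SignType.coe_neg_one
    · left; exact SignType.coe_one
  unfold Xc
  rcases h1 with h1 | h1 <;> rcases h2 with h2 | h2 <;> rw [h1, h2] <;> norm_num

lemma Xc_ne_zero (hN : (NZ n W).Nonempty) (j : ℕ) : Xc n W j ≠ 0 := by
  rcases Xc_pm n W hN j with h | h <;> rw [h] <;> norm_num



lemma RS_succ_eq {j : ℕ} (h0 : W j = 0) : RS n W (j + 1) = RS n W j := by
  ext t
  rw [mem_RS, mem_RS]
  constructor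
  · rintro ⟨ht, hle⟩; exact ⟨ht, by omega⟩
  · rintro ⟨ht, hle⟩
    refine ⟨ht, ?_⟩
    rcases Nat.eq_or_lt_of_le hle with h | h
    · exact absurd h0 (h ▸ ht.2)
    · omega

lemma ref_succ_eq {j : ℕ} (h0 : W j = 0) (hR : (RS n W j).Nonempty) :
    ref n W (j + 1) = ref n W j := by
  unfold ref
  rw [RS_succ_eq n W h0, dif_pos hR]

/-- right-pointing case: a zero column with a nonzero entry to its right -/
lemma step_right {j : ℕ} (hN : (NZ n W).Nonempty) (hj : j < n) (h0 : W j = 0)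
    (hR : (RS n W j).Nonempty) :
    j ∈ SF n W ∧ rho n W j = (j : ℝ) := by
  have hrj : ref n W j = (RS n W j).min' hR := by unfold ref; rw [dif_pos hR]
  have hmem : ref n W j ∈ RS n W j := hrj ▸ (RS n W j).min'_mem hR
  have hmem' := (mem_RS n W).1 hmem
  have hgt : j + 1 ≤ ref n W j := by
    rcases Nat.eq_or_lt_of_le hmem'.2 with h | h
    · exact absurd h0 (h ▸ hmem'.1.2)
    · omega
  have hj1 : j + 1 < n := lt_of_le_of_lt hgt hmem'.1.1
  have hXflip : Xc n W (j + 1) = - Xc n W j := by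
    unfold Xc
    rw [ref_succ_eq n W h0 hR]
    have : (-1 : ℝ) ^ (j + 1 + ref n W j) = -(-1 : ℝ) ^ (j + ref n W j) := by
      rw [show j + 1 + ref n W j = (j + ref n W j) + 1 by omega, pow_succ]
      ring
    rw [this]; ring
  have hne : Xc n W j ≠ Xc n W (j + 1) := by
    intro h
    rw [hXflip] at h
    have h3 : Xc n W j = 0 := by linarith
    exact Xc_ne_zero n W hN j h3
  constructor
  · rw [SF, Finset.mem_filter, Finset.mem_range]
    exact ⟨by omega, hne⟩
  · unfold rho
    rw [if_neg, if_pos h0]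
    rintro ⟨-, hemp⟩
    rw [RS_succ_eq n W h0] at hemp
    exact Finset.nonempty_iff_ne_empty.1 hR hemp

/-- left-pointing case: a zero column with no nonzero entry at or after it -/
lemma step_left {j : ℕ} (hN : (NZ n W).Nonempty) (hj : j < n) (h0 : W j = 0)
    (hR : ¬ (RS n W j).Nonempty) :
    1 ≤ j ∧ (j - 1) ∈ SF n W ∧ rho n W (j - 1) = (j : ℝ) := by
  set L := (NZ n W).max' hN with hL
  have hrj : ref n W j = L := by unfold ref; rw [dif_neg hR, dif_pos hN]
  have hLmem := (mem_NZ n W).1 ((NZ n W).max'_mem hN)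
  have hLlt : L < j := by
    by_contra h
    exact hR ⟨L, (mem_RS n W).2 ⟨hLmem, by omega⟩⟩
  have hj1 : 1 ≤ j := by omega
  -- ref (j-1) = L
  have hrj1 : ref n W (j - 1) = L := by
    by_cases hR1 : (RS n W (j - 1)).Nonempty
    · have hrdef : ref n W (j - 1) = (RS n W (j - 1)).min' hR1 := by
        unfold ref; rw [dif_pos hR1]
      have hmem : ref n W (j - 1) ∈ RS n W (j - 1) := hrdef ▸ Finset.min'_mem _ hR1
      have hmem' := (mem_RS n W).1 hmem
      have hlt : ref n W (j - 1) < j := by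
        by_contra h
        exact hR ⟨ref n W (j - 1), (mem_RS n W).2 ⟨hmem'.1, by omega⟩⟩
      have heq : ref n W (j - 1) = j - 1 := by omega
      have hLle : L ≤ j - 1 := by omega
      have hge : j - 1 ≤ L := Finset.le_max' _ _ ((mem_NZ n W).2 (heq ▸ hmem'.1))
      omega
    · unfold ref; rw [dif_neg hR1, dif_pos hN]
  have hXflip : Xc n W j = - Xc n W (j - 1) := by
    unfold Xc
    rw [hrj, hrj1]
    have : (-1 : ℝ) ^ (j + L) = -(-1 : ℝ) ^ (j - 1 + L) := by
      rw [show j + L = (j - 1 + L) + 1 by omega, pow_succ]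
      ring
    rw [this]; ring
  have hne : Xc n W (j - 1) ≠ Xc n W (j - 1 + 1) := by
    rw [show j - 1 + 1 = j by omega]
    intro h
    rw [hXflip] at h
    have h3 : Xc n W (j - 1) = 0 := by linarith
    exact Xc_ne_zero n W hN (j - 1) h3
  have hRempty : RS n W j = ∅ := Finset.not_nonempty_iff_eq_empty.1 hR
  refine ⟨hj1, ?_, ?_⟩
  · rw [SF, Finset.mem_filter, Finset.mem_range]
    exact ⟨by omega, hne⟩
  · unfold rho
    rw [show j - 1 + 1 = j by omega, if_pos ⟨h0, hRempty⟩]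

/-- every zero column (when some entry is nonzero) carries a root -/
lemma root_cover {j : ℕ} (hN : (NZ n W).Nonempty) (hj : j < n) (h0 : W j = 0) :
    ∃ l ∈ SF n W, rho n W l = (j : ℝ) := by
  by_cases hR : (RS n W j).Nonempty
  · obtain ⟨h1, h2⟩ := step_right n W hN hj h0 hR
    exact ⟨j, h1, h2⟩
  · obtain ⟨h1, h2, h3⟩ := step_left n W hN hj h0 hR
    exact ⟨j - 1, h2, h3⟩

/-- sign of a factor at a nonzero column -/
lemma sign_factor {j : ℕ} (hj : j < n) (hW : W j ≠ 0) (l : ℕ) :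
    SignType.sign ((j : ℝ) - rho n W l) = if j ≤ l then -1 else 1 := by
  unfold rho
  split
  · rename_i hcond
    have hne : j ≠ l + 1 := fun h => hW (h ▸ hcond.1)
    by_cases hle : j ≤ l
    · rw [if_pos hle, sign_neg]
      have : (j : ℝ) < ((l + 1 : ℕ) : ℝ) := by exact_mod_cast Nat.lt_succ_of_le hle
      linarith
    · rw [if_neg hle, sign_pos]
      have : ((l + 1 : ℕ) : ℝ) < (j : ℝ) := by exact_mod_cast (by omega : l + 1 < j)
      linarith
  · split
    · rename_i hc1 hc2
      have hne : j ≠ l := fun h => hW (h ▸ hc2)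
      by_cases hle : j ≤ l
      · rw [if_pos hle, sign_neg]
        have : (j : ℝ) < (l : ℝ) := by exact_mod_cast (by omega : j < l)
        linarith
      · rw [if_neg hle, sign_pos]
        have : (l : ℝ) < (j : ℝ) := by exact_mod_cast (by omega : l < j)
        linarith
    · by_cases hle : j ≤ l
      · rw [if_pos hle, sign_neg]
        have : (j : ℝ) ≤ (l : ℝ) := by exact_mod_cast hle
        linarith
      · rw [if_neg hle, sign_pos]
        have : (l : ℝ) + 1 ≤ (j : ℝ) := by exact_mod_cast (by omega : l + 1 ≤ j)
        linarith



/-- telescoping: value at `j` from value at `n-1` and the changes to the right -/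
lemma telescope (hN : (NZ n W).Nonempty) :
    ∀ d j, j + d = n - 1 →
      Xc n W j = Xc n W (n - 1) * (-1 : ℝ) ^ (((SF n W).filter (fun l => j ≤ l)).card) := by
  intro d
  induction d with
  | zero =>
    intro j hj
    have hj' : j = n - 1 := by omega
    subst hj'
    have hemp : (SF n W).filter (fun l => n - 1 ≤ l) = ∅ := by
      apply Finset.filter_false_of_mem
      intro l hl
      have : l < n - 1 := Finset.mem_range.1 (Finset.mem_filter.1 hl).1
      omega
    rw [hemp]
    simp
  | succ d ih =>
    intro j hj
    have hjlt : j < n - 1 := by omega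
    have hstep := ih (j + 1) (by omega)
    by_cases hS : j ∈ SF n W
    · have hsplit : (SF n W).filter (fun l => j ≤ l)
          = insert j ((SF n W).filter (fun l => j + 1 ≤ l)) := by
        ext l
        simp only [Finset.mem_filter, Finset.mem_insert]
        constructor
        · rintro ⟨hl, hle⟩
          rcases Nat.eq_or_lt_of_le hle with h | h
          · exact Or.inl h.symm
          · exact Or.inr ⟨hl, by omega⟩
        · rintro (h | ⟨hl, hle⟩)
          · exact ⟨h ▸ hS, by omega⟩
          · exact ⟨hl, by omega⟩
      have hnotmem : j ∉ (SF n W).filter (fun l => j + 1 ≤ l) := by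
        simp only [Finset.mem_filter]
        omega
      rw [hsplit, Finset.card_insert_of_notMem hnotmem, pow_succ]
      have hne : Xc n W j ≠ Xc n W (j + 1) :=
        (Finset.mem_filter.1 hS).2
      have hflip : Xc n W j = - Xc n W (j + 1) := by
        rcases Xc_pm n W hN j with h1 | h1 <;> rcases Xc_pm n W hN (j + 1) with h2 | h2 <;>
          rw [h1, h2] <;> first | (exfalso; rw [h1, h2] at hne; exact hne rfl) | norm_num
      rw [hflip, hstep]
      ring
    · have hsame : (SF n W).filter (fun l => j ≤ l) = (SF n W).filter (fun l => j + 1 ≤ l) := by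
        ext l
        simp only [Finset.mem_filter]
        constructor
        · rintro ⟨hl, hle⟩
          refine ⟨hl, ?_⟩
          rcases Nat.eq_or_lt_of_le hle with h | h
          · exact absurd (h ▸ hl) hS
          · omega
        · rintro ⟨hl, hle⟩
          exact ⟨hl, by omega⟩
      have heq : Xc n W j = Xc n W (j + 1) := by
        by_contra hne
        exact hS (Finset.mem_filter.2 ⟨Finset.mem_range.2 hjlt, hne⟩)
      rw [hsame, heq, hstep]

/-- the number of sign changes of the completion equals `(SF n W).card` -/
lemma signChanges_eq_card :
    signChanges (fun j : Fin n => Xc n W j.val) = (SF n W).card := by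
  classical
  set X : Fin n → ℝ := fun j : Fin n => Xc n W j.val with hX
  set T : Set (Fin n × Fin n) :=
    {p : Fin n × Fin n | (p.2 : ℕ) = (p.1 : ℕ) + 1 ∧ X p.1 ≠ X p.2} with hT
  have hinj : Set.InjOn (fun p : Fin n × Fin n => (p.1 : ℕ)) T := by
    rintro p hp q hq h
    have h1 : p.1 = q.1 := Fin.ext h
    have h2 : p.2 = q.2 := Fin.ext (by
      have := hp.1; have := hq.1
      omega)
    exact Prod.ext h1 h2
  have himg : (fun p : Fin n × Fin n => (p.1 : ℕ)) '' T = ↑(SF n W) := by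
    ext l
    simp only [Set.mem_image, Finset.coe_filter, Set.mem_setOf_eq, SF,
      Finset.mem_coe, Finset.mem_filter, Finset.mem_range]
    constructor
    · rintro ⟨p, ⟨hp1, hp2⟩, rfl⟩
      have hlt : (p.2 : ℕ) < n := p.2.isLt
      refine ⟨by omega, ?_⟩
      rw [← hp1]
      exact hp2
    · rintro ⟨hl, hne⟩
      refine ⟨(⟨l, by omega⟩, ⟨l + 1, by omega⟩), ⟨rfl, ?_⟩, rfl⟩
      simpa [hX] using hne
  have : signChanges X = T.ncard := rfl
  rw [this, ← Set.ncard_image_of_injOn hinj, himg, Set.ncard_coe_finset]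

lemma isFullCompletion_Xc {V : Fin n → SignType}
    (hWV : ∀ j : Fin n, W j.val = V j) (hN : (NZ n W).Nonempty) :
    IsFullCompletion V (fun j : Fin n => Xc n W j.val) := by
  refine ⟨fun j => Xc_pm n W hN j.val, fun j hj => ?_, fun j hj => ?_⟩
  · have hW : W j.val ≠ 0 := by rw [hWV j, hj]; simp
    simp only
    rw [Xc_eq_cast n W j.isLt hW, hWV j, hj, SignType.coe_one]
  · have hW : W j.val ≠ 0 := by rw [hWV j, hj]; simp
    simp only
    rw [Xc_eq_cast n W j.isLt hW, hWV j, hj, SignType.coe_neg_one]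

lemma SF_card_le {V : Fin n → SignType}
    (hWV : ∀ j : Fin n, W j.val = V j) (hN : (NZ n W).Nonempty) :
    (SF n W).card ≤ genSignChanges V := by
  rw [← signChanges_eq_card]
  apply le_csSup
  · refine ⟨Fintype.card (Fin n × Fin n), ?_⟩
    rintro c ⟨X, _, rfl⟩
    calc signChanges X ≤ (Set.univ : Set (Fin n × Fin n)).ncard :=
          Set.ncard_le_ncard (Set.subset_univ _) Set.finite_univ
      _ = Fintype.card (Fin n × Fin n) := by
          rw [Set.ncard_univ, Nat.card_eq_fintype_card]
  · exact ⟨fun j : Fin n => Xc n W j.val, isFullCompletion_Xc n W hWV hN, rfl⟩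

lemma sign_prod {ι : Type*} (s : Finset ι) (f : ι → ℝ) :
    SignType.sign (∏ i ∈ s, f i) = ∏ i ∈ s, SignType.sign (f i) :=
  map_prod signHom f s

lemma row_poly {n k : ℕ} (hk : 1 ≤ k) (V : Fin n → SignType)
    (h : genSignChanges V < k) :
    ∃ p : Polynomial ℝ, p.natDegree < k ∧
      ∀ j : Fin n, SignType.sign (p.eval ((j : ℕ) : ℝ)) = V j := by
  classical
  set W : ℕ → SignType := fun t => if h : t < n then V ⟨t, h⟩ else 0 with hWdef
  have hWV : ∀ j : Fin n, W j.val = V j := fun j => by simp [hWdef, j.isLt]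
  by_cases hN : (NZ n W).Nonempty
  · set e : ℝ := Xc n W (n - 1) with he
    set p : Polynomial ℝ :=
      Polynomial.C e * ∏ l ∈ SF n W, (Polynomial.X - Polynomial.C (rho n W l)) with hp
    have hn1 : 1 ≤ n := by
      obtain ⟨t, ht⟩ := hN
      have := ((mem_NZ n W).1 ht).1
      omega
    refine ⟨p, ?_, ?_⟩
    · have h2 : (∏ l ∈ SF n W, (Polynomial.X - Polynomial.C (rho n W l))).natDegree
          ≤ (SF n W).card := by
        refine (Polynomial.natDegree_prod_le _ _).trans ?_
        simp [Polynomial.natDegree_X_sub_C]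
      have h1 : p.natDegree ≤ (SF n W).card := by
        refine (Polynomial.natDegree_mul_le).trans ?_
        simpa [Polynomial.natDegree_C] using h2
      have h3 := SF_card_le n W hWV hN
      omega
    · intro j
      have heval : p.eval ((j : ℕ) : ℝ)
          = e * ∏ l ∈ SF n W, (((j : ℕ) : ℝ) - rho n W l) := by
        simp [hp, Polynomial.eval_prod]
      by_cases h0 : V j = 0
      · have hW0 : W j.val = 0 := by rw [hWV j, h0]
        obtain ⟨l, hl, hrho⟩ := root_cover n W hN j.isLt hW0
        have hz : ∏ l ∈ SF n W, (((j : ℕ) : ℝ) - rho n W l) = 0 :=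
          Finset.prod_eq_zero hl (by rw [hrho]; ring)
        rw [heval, hz, mul_zero, sign_zero, h0]
      · have hW0 : W j.val ≠ 0 := by rw [hWV j]; exact h0
        set c : ℕ := ((SF n W).filter (fun l => j.val ≤ l)).card with hc
        have hsigneval : SignType.sign (p.eval ((j : ℕ) : ℝ))
            = SignType.sign e * (-1 : SignType) ^ c := by
          rw [heval, sign_mul, sign_prod]
          congr 1
          rw [Finset.prod_congr rfl (fun l _ => sign_factor n W j.isLt hW0 l)]
          rw [Finset.prod_ite]
          simp [hc]
        have htel := telescope n W hN (n - 1 - j.val) j.val (by omega)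
        have hXsign : SignType.sign (Xc n W j.val) = SignType.sign e * (-1 : SignType) ^ c := by
          rw [htel, sign_mul, sign_pow]
          rw [show SignType.sign (-1 : ℝ) = -1 from sign_neg (by norm_num)]
        have hXV : SignType.sign (Xc n W j.val) = V j := by
          rw [Xc_eq_cast n W j.isLt hW0, hWV j]
          rcases hV : V j with _ | _ | _
          · exact absurd hV h0
          · rw [show ((SignType.neg : SignType) : ℝ) = (-1 : ℝ) from rfl]
            rw [show SignType.sign (-1 : ℝ) = -1 from sign_neg (by norm_num)]
            rfl
          · rw [show ((SignType.pos : SignType) : ℝ) = (1 : ℝ) from rfl, sign_one]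
            rfl
        rw [hsigneval, ← hXsign, hXV]
  · refine ⟨0, by simp; omega, fun j => ?_⟩
    have h0 : V j = 0 := by
      by_contra hne
      exact hN ⟨j.val, (mem_NZ n W).2 ⟨j.isLt, by rw [hWV j]; exact hne⟩⟩
    simp [h0]

end SPLRAux

/-- If every row of the sign pattern `χ` has generalized number of sign changes less than
`k ≥ 1`, then there is a real matrix with sign pattern `χ` and rank at most `k`. -/
theorem sign_pattern_low_rank_lift
    (m n k : ℕ) (hk : 1 ≤ k) (χ : Fin m → Fin n → SignType)
    (hrow : ∀ i, genSignChanges (χ i) < k) :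
    ∃ A : Matrix (Fin m) (Fin n) ℝ,
      (∀ i j, SignType.sign (A i j) = χ i j) ∧ A.rank ≤ k := by
  have key : ∀ i, ∃ p : Polynomial ℝ, p.natDegree < k ∧
      ∀ j : Fin n, SignType.sign (p.eval ((j : ℕ) : ℝ)) = χ i j :=
    fun i => SPLRAux.row_poly hk (χ i) (hrow i)
  choose p hdeg hsign using key
  refine ⟨Matrix.of (fun i j => (p i).eval ((j : ℕ) : ℝ)), fun i j => hsign i j, ?_⟩
  have hfac : Matrix.of (fun (i : Fin m) (j : Fin n) => (p i).eval ((j : ℕ) : ℝ))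
      = (Matrix.of fun i (s : Fin k) => (p i).coeff s.val)
        * (Matrix.of fun (s : Fin k) (j : Fin n) => ((j : ℕ) : ℝ) ^ (s : ℕ)) := by
    ext i j
    rw [Matrix.mul_apply]
    simp only [Matrix.of_apply]
    rw [Polynomial.eval_eq_sum_range' (hdeg i)]
    exact (Fin.sum_univ_eq_sum_range (fun s => (p i).coeff s * ((j : ℕ) : ℝ) ^ s) k).symm
  rw [hfac]
  exact (Matrix.rank_mul_le_right _ _).trans
    ((Matrix.rank_le_card_height _).trans_eq (Fintype.card_fin k))
end

section
/- Let x_1 < x_2 < … < x_n be real numbers, let r ≥ 1, and let V : Fin n → SignType be a sign vector whose generalized number of sign changes satisfies σ(V) < r. Then there exists a real polynomial p with degree p < r such that SignType.sign (p(x_i)) = V i for all i (in particular p(x_i) = 0 exactly when V i = 0). -/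
open Finset

namespace AltMatroidAux

/-- positions `≥ m` (below `n`) where `W` is nonzero -/
def SS (n : ℕ) (W : ℕ → SignType) (m : ℕ) : Finset ℕ :=
  (Finset.range n).filter fun k => m ≤ k ∧ W k ≠ 0

lemma mem_SS {n W m k} : k ∈ SS n W m ↔ k < n ∧ m ≤ k ∧ W k ≠ 0 := by
  simp [SS]

lemma SS_succ {n W m} (hm : W m = 0) : SS n W m = SS n W (m+1) := by
  ext k
  simp only [mem_SS]
  constructor
  · rintro ⟨h1, h2, h3⟩
    refine ⟨h1, ?_, h3⟩
    rcases Nat.eq_or_lt_of_le h2 with rfl | h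
    · exact absurd hm h3
    · exact h
  · rintro ⟨h1, h2, h3⟩
    exact ⟨h1, le_trans (Nat.le_succ m) h2, h3⟩

/-- the alternating completion -/
noncomputable def Xc (n : ℕ) (W : ℕ → SignType) (b : ℕ) (m : ℕ) : ℝ :=
  if h : (SS n W m).Nonempty then
    (-1)^((SS n W m).min' h - m) * ((W ((SS n W m).min' h) : ℝ))
  else (-1)^(m - b) * ((W b : ℝ))

section basic

variable {n : ℕ} {W : ℕ → SignType} (hT : (SS n W 0).Nonempty)

lemma b_lt (hb : b = (SS n W 0).max' hT) : b < n := by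
  have := (SS n W 0).min'_mem hT
  have h2 := (SS n W 0).max'_mem hT
  rw [← hb] at h2
  exact (mem_SS.mp h2).1

lemma Wb_ne (hb : b = (SS n W 0).max' hT) : W b ≠ 0 := by
  have h2 := (SS n W 0).max'_mem hT
  rw [← hb] at h2
  exact (mem_SS.mp h2).2.2

lemma W_zero_of_gt (hW : ∀ k, n ≤ k → W k = 0) (hb : b = (SS n W 0).max' hT)
    {k : ℕ} (hk : b < k) : W k = 0 := by
  by_contra h
  rcases lt_or_ge k n with h1 | h1
  · have : k ∈ SS n W 0 := mem_SS.mpr ⟨h1, Nat.zero_le _, h⟩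
    have := Finset.le_max' _ _ this
    rw [← hb] at this
    omega
  · exact h (hW k h1)

lemma SS_empty_of_gt (hW : ∀ k, n ≤ k → W k = 0) (hb : b = (SS n W 0).max' hT)
    {m : ℕ} (hm : b < m) : SS n W m = ∅ := by
  rw [Finset.eq_empty_iff_forall_notMem]
  intro k hk
  rw [mem_SS] at hk
  exact hk.2.2 (W_zero_of_gt hT hW hb (lt_of_lt_of_le hm hk.2.1))

lemma Xc_of_ne (hm : m < n) (hmW : W m ≠ 0) (b : ℕ) : Xc n W b m = (W m : ℝ) := by
  have hmem : m ∈ SS n W m := mem_SS.mpr ⟨hm, le_refl _, hmW⟩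
  have h : (SS n W m).Nonempty := ⟨m, hmem⟩
  have hmin : (SS n W m).min' h = m := by
    refine le_antisymm (Finset.min'_le _ _ hmem) ?_
    exact (mem_SS.mp ((SS n W m).min'_mem h)).2.1
  rw [Xc, dif_pos h, hmin]
  simp

lemma Xc_zero_step {m : ℕ} (hm0 : W m = 0) (h : (SS n W m).Nonempty) (b : ℕ) :
    Xc n W b m = - Xc n W b (m+1) := by
  have hSS := SS_succ (n := n) hm0
  have h' : (SS n W (m+1)).Nonempty := hSS ▸ h
  have hmin : (SS n W m).min' h = (SS n W (m+1)).min' h' := by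
    congr 1
  set g := (SS n W (m+1)).min' h' with hg
  have hge : m + 1 ≤ g := (mem_SS.mp ((SS n W (m+1)).min'_mem h')).2.1
  rw [Xc, Xc, dif_pos h, dif_pos h', hmin]
  have : g - m = (g - (m+1)) + 1 := by omega
  rw [this, pow_succ]
  ring

lemma Xc_trailing_step (hW : ∀ k, n ≤ k → W k = 0) (hb : b = (SS n W 0).max' hT)
    {m : ℕ} (hm : b ≤ m) : Xc n W b (m+1) = - Xc n W b m := by
  have he : SS n W (m+1) = ∅ := SS_empty_of_gt hT hW hb (by omega)
  rw [Xc, dif_neg (by simp [he])]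
  rcases Nat.eq_or_lt_of_le hm with rfl | h
  · rw [Xc_of_ne (b_lt hT hb) (Wb_ne hT hb)]
    have : b + 1 - b = 1 := by omega
    rw [this]; ring
  · have he2 : SS n W m = ∅ := SS_empty_of_gt hT hW hb h
    rw [Xc, dif_neg (by simp [he2])]
    have : m + 1 - b = (m - b) + 1 := by omega
    rw [this, pow_succ]
    ring

lemma coe_pm {s : SignType} (h : s ≠ 0) : (s:ℝ) = 1 ∨ (s:ℝ) = -1 := by
  cases s <;> simp_all

lemma Xc_pm (hT : (SS n W 0).Nonempty) (hb : b = (SS n W 0).max' hT) (m : ℕ) :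
    Xc n W b m = 1 ∨ Xc n W b m = -1 := by
  rw [Xc]
  split_ifs with h
  · have := (mem_SS.mp ((SS n W m).min'_mem h)).2.2
    rcases coe_pm this with h1 | h1 <;> rw [h1] <;>
      rcases Nat.even_or_odd ((SS n W m).min' h - m) with he | he <;>
        simp [he.neg_one_pow, Even.neg_one_pow, Odd.neg_one_pow, he]
  · rcases coe_pm (Wb_ne hT hb) with h1 | h1 <;> rw [h1] <;>
      rcases Nat.even_or_odd (m - b) with he | he <;>
        simp [he.neg_one_pow, Even.neg_one_pow, Odd.neg_one_pow, he]

end basic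

end AltMatroidAux

namespace AltMatroidAux

/-- zero positions -/
def Zs (n : ℕ) (W : ℕ → SignType) : Finset ℕ := (Finset.range n).filter fun j => W j = 0

/-- positions where an extra sign-flip root is needed -/
noncomputable def Ms (n : ℕ) (W : ℕ → SignType) (b : ℕ) : Finset ℕ :=
  (Finset.range (n-1)).filter fun k =>
    W k ≠ 0 ∧ (SS n W (k+1)).Nonempty ∧ Xc n W b k ≠ Xc n W b (k+1)

noncomputable def Zgt (n : ℕ) (W : ℕ → SignType) (i : ℕ) : ℕ :=
  ((Zs n W).filter fun j => i < j).card

noncomputable def Mge (n : ℕ) (W : ℕ → SignType) (b i : ℕ) : ℕ :=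
  ((Ms n W b).filter fun k => i ≤ k).card

noncomputable def eps (n : ℕ) (W : ℕ → SignType) (b : ℕ) : SignType :=
  (-1)^(Zgt n W b) * W b

lemma coe_rel {s t : SignType} (hs : s ≠ 0) (ht : t ≠ 0) (d : ℕ)
    (h : (s:ℝ) = (-1)^d * (t:ℝ)) : t * (-1)^d = s := by
  rcases Nat.even_or_odd d with he | ho
  · rw [he.neg_one_pow, one_mul] at h
    rw [he.neg_one_pow, mul_one]
    cases s <;> cases t <;> simp_all <;> norm_num at h
  · rw [ho.neg_one_pow, neg_one_mul] at h
    rw [ho.neg_one_pow, mul_neg_one]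
    cases s <;> cases t <;> simp_all <;> norm_num at h

lemma coe_rel' {s t : SignType} (hs : s ≠ 0) (ht : t ≠ 0) (d : ℕ)
    (h : (s:ℝ) ≠ (-1)^d * (t:ℝ)) : t * (-1)^(d+1) = s := by
  apply coe_rel hs ht
  rw [pow_succ]
  rcases Nat.even_or_odd d with he | ho
  · rw [he.neg_one_pow, one_mul] at h ⊢
    rcases coe_pm hs with h1 | h1 <;> rcases coe_pm ht with h2 | h2 <;>
      rw [h1, h2] at h ⊢ <;> revert h <;> norm_num
  · rw [ho.neg_one_pow, neg_one_mul] at h ⊢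
    rcases coe_pm hs with h1 | h1 <;> rcases coe_pm ht with h2 | h2 <;>
      rw [h1, h2] at h ⊢ <;> revert h <;> norm_num

section cond

variable {n : ℕ} {W : ℕ → SignType} (hT : (SS n W 0).Nonempty)

lemma sign_cond (hW : ∀ k, n ≤ k → W k = 0) (hb : b = (SS n W 0).max' hT) :
    ∀ i, i < n → W i ≠ 0 →
      eps n W b * (-1)^(Zgt n W i + Mge n W b i) = W i := by
  have hbn := b_lt hT hb
  have hWb := Wb_ne hT hb
  suffices H : ∀ d i, b - i ≤ d → i < n → W i ≠ 0 →
      eps n W b * (-1)^(Zgt n W i + Mge n W b i) = W i by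
    intro i hi hWi
    exact H (b - i) i le_rfl hi hWi
  have base : eps n W b * (-1)^(Zgt n W b + Mge n W b b) = W b := by
    have hM : Mge n W b b = 0 := by
      rw [Mge, Finset.card_eq_zero, Finset.eq_empty_iff_forall_notMem]
      intro k hk
      rw [Finset.mem_filter, Ms, Finset.mem_filter] at hk
      obtain ⟨⟨_, hk1, hk2, _⟩, hk3⟩ := hk
      rcases Nat.eq_or_lt_of_le hk3 with rfl | h
      · rw [SS_empty_of_gt hT hW hb (by omega)] at hk2
        exact Finset.not_nonempty_empty hk2
      · exact hk1 (W_zero_of_gt hT hW hb h)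
    rw [hM, add_zero, eps, mul_comm ((-1:SignType)^(Zgt n W b)) (W b), mul_assoc,
      ← pow_add]
    rw [Even.neg_one_pow ⟨Zgt n W b, rfl⟩, mul_one]
  intro d
  induction d with
  | zero =>
    intro i hd hi hWi
    have hib : i ≤ b := by
      rw [hb]; exact Finset.le_max' _ _ (mem_SS.mpr ⟨hi, Nat.zero_le _, hWi⟩)
    have hieq : i = b := by omega
    rw [hieq]; exact base
  | succ d ih =>
    intro i hd hi hWi
    have hib : i ≤ b := by
      rw [hb]; exact Finset.le_max' _ _ (mem_SS.mpr ⟨hi, Nat.zero_le _, hWi⟩)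
    rcases Nat.eq_or_lt_of_le hib with hieq | hilt
    · rw [hieq]; exact base
    -- i < b
    have hne : (SS n W (i+1)).Nonempty :=
      ⟨b, mem_SS.mpr ⟨hbn, by omega, hWb⟩⟩
    set g := (SS n W (i+1)).min' hne with hgdef
    have hgmem := (SS n W (i+1)).min'_mem hne
    rw [mem_SS] at hgmem
    obtain ⟨hgn, hgi, hgW⟩ := hgmem
    have hgb : g ≤ b := Finset.min'_le _ _ (mem_SS.mpr ⟨hbn, by omega, hWb⟩)
    have hzero : ∀ j, i < j → j < g → W j = 0 := by
      intro j h1 h2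
      by_contra h3
      have : j ∈ SS n W (i+1) := mem_SS.mpr ⟨by omega, by omega, h3⟩
      have := Finset.min'_le _ _ this
      omega
    -- c1 : zeros count
    have c1 : Zgt n W i = (g - (i+1)) + Zgt n W g := by
      have hsplit : (Zs n W).filter (fun j => i < j)
          = Finset.Ioo i g ∪ (Zs n W).filter (fun j => g < j) := by
        ext j
        simp only [Finset.mem_filter, Finset.mem_union, Finset.mem_Ioo, Zs,
          Finset.mem_range]
        constructor
        · rintro ⟨⟨hj1, hj2⟩, hj3⟩
          rcases lt_trichotomy j g with h | rfl | h
          · exact Or.inl ⟨hj3, h⟩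
          · exact absurd hj2 hgW
          · exact Or.inr ⟨⟨hj1, hj2⟩, h⟩
        · rintro (⟨h1, h2⟩ | ⟨⟨h1, h2⟩, h3⟩)
          · exact ⟨⟨by omega, hzero j h1 h2⟩, h1⟩
          · exact ⟨⟨h1, h2⟩, by omega⟩
      rw [Zgt, hsplit, Finset.card_union_of_disjoint, Nat.card_Ioo, Zgt]
      · omega
      · rw [Finset.disjoint_left]
        intro a ha ha'
        rw [Finset.mem_Ioo] at ha
        rw [Finset.mem_filter] at ha'
        omega
    -- c2 : M count
    have c2 : Mge n W b i = (if i ∈ Ms n W b then 1 else 0) + Mge n W b g := by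
      have hsplit : (Ms n W b).filter (fun k => i ≤ k)
          = (Ms n W b).filter (fun k => k = i) ∪ (Ms n W b).filter (fun k => g ≤ k) := by
        ext k
        simp only [Finset.mem_filter, Finset.mem_union]
        constructor
        · rintro ⟨hk, hik⟩
          rcases Nat.eq_or_lt_of_le hik with rfl | h
          · exact Or.inl ⟨hk, rfl⟩
          · refine Or.inr ⟨hk, ?_⟩
            by_contra h2
            have hkW : W k ≠ 0 := by
              rw [Ms, Finset.mem_filter] at hk; exact hk.2.1
            exact hkW (hzero k h (by omega))
        · rintro (⟨hk, rfl⟩ | ⟨hk, h⟩)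
          · exact ⟨hk, le_rfl⟩
          · exact ⟨hk, by omega⟩
      rw [Mge, hsplit, Finset.card_union_of_disjoint, Finset.filter_eq', Mge]
      · split_ifs with h <;> simp
      · rw [Finset.disjoint_left]
        intro a ha ha'
        rw [Finset.mem_filter] at ha ha'
        omega
    -- c3 : membership criterion
    have hXci : Xc n W b i = (W i : ℝ) := Xc_of_ne hi hWi b
    have hXci1 : Xc n W b (i+1) = (-1)^(g - (i+1)) * (W g : ℝ) := by
      rw [Xc, dif_pos hne]
    have c3 : i ∈ Ms n W b ↔ (W i : ℝ) ≠ (-1)^(g-(i+1)) * (W g : ℝ) := by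
      rw [Ms, Finset.mem_filter, Finset.mem_range]
      constructor
      · rintro ⟨_, _, _, h⟩
        rwa [hXci, hXci1] at h
      · intro h
        refine ⟨by omega, hWi, hne, ?_⟩
        rwa [hXci, hXci1]
    -- apply IH at g
    have ihg := ih g (by omega) hgn hgW
    have hexp : Zgt n W i + Mge n W b i
        = (Zgt n W g + Mge n W b g) + ((g - (i+1)) + (if i ∈ Ms n W b then 1 else 0)) := by
      rw [c1, c2]; ring
    rw [hexp, pow_add, ← mul_assoc, ihg]
    by_cases hc : (W i : ℝ) = (-1)^(g-(i+1)) * (W g : ℝ)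
    · rw [if_neg (by rw [c3]; push_neg; exact hc), add_zero]
      exact coe_rel hWi hgW _ hc
    · rw [if_pos (c3.mpr hc)]
      exact coe_rel' hWi hgW _ hc

end cond

end AltMatroidAux

namespace AltMatroidAux

section count

variable {n : ℕ} {W : ℕ → SignType} (hT : (SS n W 0).Nonempty)

/-- the changing pairs of the completion -/
noncomputable def Cs (n : ℕ) (W : ℕ → SignType) (b : ℕ) : Finset ℕ :=
  (Finset.range (n-1)).filter fun k => Xc n W b k ≠ Xc n W b (k+1)

lemma neg_ne_of_pm {a : ℝ} (h : a = 1 ∨ a = -1) : -a ≠ a := by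
  rcases h with rfl | rfl <;> norm_num

lemma card_ZM_le (hW : ∀ k, n ≤ k → W k = 0) (hb : b = (SS n W 0).max' hT) :
    (Zs n W).card + (Ms n W b).card ≤ (Cs n W b).card := by
  have hbn := b_lt hT hb
  have hWb := Wb_ne hT hb
  classical
  have hdisj : Disjoint (Zs n W) (Ms n W b) := by
    rw [Finset.disjoint_left]
    intro a ha ha'
    rw [Zs, Finset.mem_filter] at ha
    rw [Ms, Finset.mem_filter] at ha'
    exact ha'.2.1 ha.2
  rw [← Finset.card_union_of_disjoint hdisj]
  apply Finset.card_le_card_of_injOn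
    (fun j => if (SS n W (j+1)).Nonempty then j else j - 1)
  · -- maps to Cs
    intro j hj
    rw [Finset.mem_coe] at hj ⊢
    beta_reduce
    rw [Finset.mem_union] at hj
    rcases hj with hj | hj
    · rw [Zs, Finset.mem_filter, Finset.mem_range] at hj
      obtain ⟨hjn, hjW⟩ := hj
      by_cases h1 : (SS n W (j+1)).Nonempty
      · rw [if_pos h1]
        have hSj : (SS n W j).Nonempty := by rw [SS_succ hjW]; exact h1
        have hg := (SS n W (j+1)).min'_mem h1
        rw [mem_SS] at hg
        rw [Cs, Finset.mem_filter, Finset.mem_range]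
        constructor
        · omega
        · rw [Xc_zero_step hjW hSj b]
          exact neg_ne_of_pm (Xc_pm hT hb (j+1))
      · rw [if_neg h1]
        have hjb : b < j := by
          by_contra h2
          push_neg at h2
          have hjneb : j ≠ b := fun h => hWb (h ▸ hjW)
          exact h1 ⟨b, mem_SS.mpr ⟨hbn, by omega, hWb⟩⟩
        have hj1 : 1 ≤ j := by omega
        rw [Cs, Finset.mem_filter, Finset.mem_range]
        constructor
        · omega
        · have heq : j - 1 + 1 = j := by omega
          rw [heq]
          have := Xc_trailing_step hT hW hb (m := j - 1) (by omega)
          rw [heq] at this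
          rw [this]
          exact (neg_ne_of_pm (Xc_pm hT hb (j-1))).symm
    · rw [Ms, Finset.mem_filter, Finset.mem_range] at hj
      obtain ⟨hjn, hjW, hjS, hjX⟩ := hj
      rw [if_pos hjS, Cs, Finset.mem_filter, Finset.mem_range]
      exact ⟨hjn, hjX⟩
  · -- injective on the union
    intro j hj j' hj' hee
    dsimp only at hee
    simp only [Finset.coe_union, Set.mem_union, Finset.mem_coe] at hj hj'
    have hZ1 : ∀ a, a ∈ Zs n W ∪ Ms n W b → ¬(SS n W (a+1)).Nonempty →
        a ∈ Zs n W ∧ b < a := by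
      intro a ha hSa
      rw [Finset.mem_union] at ha
      rcases ha with ha | ha
      · refine ⟨ha, ?_⟩
        rw [Zs, Finset.mem_filter] at ha
        by_contra h2
        push_neg at h2
        have : a ≠ b := fun h => hWb (h ▸ ha.2)
        exact hSa ⟨b, mem_SS.mpr ⟨hbn, by omega, hWb⟩⟩
      · rw [Ms, Finset.mem_filter] at ha
        exact absurd ha.2.2.1 hSa
    by_cases h1 : (SS n W (j+1)).Nonempty <;> by_cases h2 : (SS n W (j'+1)).Nonempty
    · rw [if_pos h1, if_pos h2] at hee; exact hee
    · rw [if_pos h1, if_neg h2] at hee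
      obtain ⟨hz', hb'⟩ := hZ1 j' (by simpa using hj') h2
      -- j = j' - 1, so j + 1 = j', and SS (j'+1) empty, W j' = 0 ⇒ SS j' empty
      rw [Zs, Finset.mem_filter] at hz'
      have : SS n W j' = SS n W (j'+1) := SS_succ hz'.2
      have hSj' : ¬(SS n W j').Nonempty := by rw [this]; exact h2
      have hj1 : j + 1 = j' := by omega
      rw [← hj1] at hSj'
      exact absurd h1 hSj'
    · rw [if_neg h1, if_pos h2] at hee
      obtain ⟨hz, hbj⟩ := hZ1 j (by simpa using hj) h1
      rw [Zs, Finset.mem_filter] at hz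
      have : SS n W j = SS n W (j+1) := SS_succ hz.2
      have hSj : ¬(SS n W j).Nonempty := by rw [this]; exact h1
      have hj1 : j' + 1 = j := by omega
      rw [← hj1] at hSj
      exact absurd h2 hSj
    · rw [if_neg h1, if_neg h2] at hee
      obtain ⟨_, hbj⟩ := hZ1 j (by simpa using hj) h1
      obtain ⟨_, hbj'⟩ := hZ1 j' (by simpa using hj') h2
      omega

lemma signChanges_eq (b : ℕ) :
    signChanges (fun i : Fin n => Xc n W b (i:ℕ)) = (Cs n W b).card := by
  classical
  rw [signChanges]
  have hset : {p : Fin n × Fin n | (p.2 : ℕ) = (p.1 : ℕ) + 1 ∧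
      Xc n W b (p.1:ℕ) ≠ Xc n W b (p.2:ℕ)}
      = ↑(Finset.univ.filter fun p : Fin n × Fin n =>
          (p.2 : ℕ) = (p.1 : ℕ) + 1 ∧ Xc n W b (p.1:ℕ) ≠ Xc n W b (p.2:ℕ)) := by
    ext p; simp
  rw [hset, Set.ncard_coe_finset]
  apply Finset.card_bij (fun p _ => (p.1 : ℕ))
  · intro p hp
    rw [Finset.mem_filter] at hp
    obtain ⟨_, hp1, hp2⟩ := hp
    rw [Cs, Finset.mem_filter, Finset.mem_range]
    constructor
    · have := p.2.isLt; omega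
    · rwa [← hp1]
  · intro p hp q hq hpq
    rw [Finset.mem_filter] at hp hq
    have h1 : p.1 = q.1 := Fin.ext hpq
    have h2 : p.2 = q.2 := by
      apply Fin.ext
      rw [hp.2.1, hq.2.1, hpq]
    exact Prod.ext h1 h2
  · intro k hk
    rw [Cs, Finset.mem_filter, Finset.mem_range] at hk
    obtain ⟨hk1, hk2⟩ := hk
    refine ⟨(⟨k, by omega⟩, ⟨k+1, by omega⟩), ?_, rfl⟩
    rw [Finset.mem_filter]
    exact ⟨Finset.mem_univ _, rfl, hk2⟩

lemma isFullCompletion_Xc (hb : b = (SS n W 0).max' hT) (V : Fin n → SignType)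
    (hWV : ∀ i : Fin n, W (i:ℕ) = V i) :
    IsFullCompletion V (fun i : Fin n => Xc n W b (i:ℕ)) := by
  refine ⟨fun j => Xc_pm hT hb _, fun j hj => ?_, fun j hj => ?_⟩
  · have hW : W (j:ℕ) ≠ 0 := by rw [hWV, hj]; decide
    show Xc n W b (j:ℕ) = 1
    rw [Xc_of_ne j.isLt hW, hWV, hj]; simp
  · have hW : W (j:ℕ) ≠ 0 := by rw [hWV, hj]; decide
    show Xc n W b (j:ℕ) = -1
    rw [Xc_of_ne j.isLt hW, hWV, hj]; simp

lemma signChanges_le_gen {V : Fin n → SignType} {X : Fin n → ℝ}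
    (hX : IsFullCompletion V X) : signChanges X ≤ genSignChanges V := by
  apply le_csSup
  · refine ⟨n*n, ?_⟩
    rintro c ⟨Y, _, rfl⟩
    rw [signChanges]
    calc Set.ncard _ ≤ Set.ncard (Set.univ : Set (Fin n × Fin n)) :=
          Set.ncard_le_ncard (Set.subset_univ _) Set.finite_univ
      _ = n * n := by
          rw [Set.ncard_univ, Nat.card_eq_fintype_card, Fintype.card_prod, Fintype.card_fin]
  · exact ⟨X, hX, rfl⟩

end count

end AltMatroidAux

namespace AltMatroidAux

lemma sign_prod (R : Finset ℝ) (f : ℝ → ℝ) :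
    SignType.sign (∏ ρ ∈ R, f ρ) = ∏ ρ ∈ R, SignType.sign (f ρ) := by
  classical
  induction R using Finset.induction with
  | empty => simp
  | insert _ _ h ih => rw [Finset.prod_insert h, Finset.prod_insert h, sign_mul, ih]

lemma prod_sign (R : Finset ℝ) (t : ℝ) (ht : ∀ ρ ∈ R, ρ ≠ t) :
    SignType.sign (∏ ρ ∈ R, (t - ρ))
      = (-1)^((R.filter fun ρ => t < ρ).card) := by
  classical
  rw [sign_prod]
  have hcg : ∀ ρ ∈ R, SignType.sign (t - ρ) = if t < ρ then (-1:SignType) else 1 := by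
    intro ρ hρ
    split_ifs with h
    · exact sign_neg (by linarith)
    · have : ρ < t := lt_of_le_of_ne (not_lt.mp h) (ht ρ hρ)
      exact sign_pos (by linarith)
  rw [Finset.prod_congr rfl hcg, Finset.prod_ite, Finset.prod_const, Finset.prod_const,
    one_pow, mul_one]

lemma sign_coe (s : SignType) : SignType.sign ((s:ℝ)) = s := by
  cases s <;> simp

lemma coe_ne_zero {s : SignType} (h : s ≠ 0) : (s:ℝ) ≠ 0 := by
  cases s <;> simp_all

end AltMatroidAux

open AltMatroidAux in
/-- A sign vector whose generalized number of sign changes is less than `r ≥ 1` is realized,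
along the points `x₁ < ⋯ < xₙ`, by the sign vector of values of a real polynomial of degree
less than `r` (the vector is a covector of the realizable alternating oriented matroid
`C^{n,r}`). -/
theorem covector_of_alternating_matroid_realized_by_polynomial
    (n r : ℕ) (hr : 1 ≤ r) (x : Fin n → ℝ) (hx : StrictMono x)
    (V : Fin n → SignType) (hV : genSignChanges V < r) :
    ∃ p : Polynomial ℝ, p.degree < (r : ℕ) ∧
      ∀ i, SignType.sign (p.eval (x i)) = V i := by
  classical
  by_cases hall : ∀ i, V i = 0
  · refine ⟨0, ?_, fun i => ?_⟩
    · rw [Polynomial.degree_zero]; exact WithBot.bot_lt_coe r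
    · rw [Polynomial.eval_zero, sign_zero, hall i]
  · push_neg at hall
    obtain ⟨i0, hi0⟩ := hall
    set W : ℕ → SignType := fun m => if h : m < n then V ⟨m, h⟩ else 0 with hWdef
    have hWV : ∀ i : Fin n, W (i:ℕ) = V i := by
      intro i; simp only [hWdef, dif_pos i.isLt, Fin.eta]
    have hW : ∀ k, n ≤ k → W k = 0 := by
      intro k hk; simp only [hWdef, dif_neg (Nat.not_lt.mpr hk)]
    have hT : (SS n W 0).Nonempty :=
      ⟨(i0:ℕ), mem_SS.mpr ⟨i0.isLt, Nat.zero_le _, by rw [hWV]; exact hi0⟩⟩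
    set b := (SS n W 0).max' hT with hb
    have hbn := b_lt hT hb
    have hWb := Wb_ne hT hb
    have hsc := sign_cond hT hW hb
    have hcard : (Zs n W).card + (Ms n W b).card ≤ genSignChanges V := by
      calc (Zs n W).card + (Ms n W b).card ≤ (Cs n W b).card := card_ZM_le hT hW hb
        _ = signChanges (fun i : Fin n => Xc n W b (i:ℕ)) := (signChanges_eq b).symm
        _ ≤ genSignChanges V := signChanges_le_gen (isFullCompletion_Xc hT hb V hWV)
    -- geometric realization of the roots
    set y : ℕ → ℝ := fun m => if h : m < n then x ⟨m, h⟩ else 0 with hydef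
    set mid : ℕ → ℝ := fun k => (y k + y (k+1))/2 with hmiddef
    have hy : ∀ i : Fin n, y (i:ℕ) = x i := by
      intro i; simp only [hydef, dif_pos i.isLt, Fin.eta]
    have hylt : ∀ j k, j < n → k < n → (y j < y k ↔ j < k) := by
      intro j k hj hk
      simp only [hydef, dif_pos hj, dif_pos hk]
      rw [hx.lt_iff_lt, Fin.mk_lt_mk]
    have hyle : ∀ j k, j < n → k < n → j ≤ k → y j ≤ y k := by
      intro j k hj hk h
      rcases Nat.eq_or_lt_of_le h with rfl | h
      · exact le_rfl
      · exact le_of_lt ((hylt j k hj hk).mpr h)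
    have hmidlt : ∀ k, k + 1 < n → y k < mid k ∧ mid k < y (k+1) := by
      intro k hk
      have h1 : y k < y (k+1) := (hylt k (k+1) (by omega) hk).mpr (by omega)
      constructor <;> (simp only [hmiddef]; linarith)
    have hZmem : ∀ j ∈ Zs n W, j < n := by
      intro j hj; rw [Zs, Finset.mem_filter, Finset.mem_range] at hj; exact hj.1
    have hMmem : ∀ k ∈ Ms n W b, k + 1 < n := by
      intro k hk; rw [Ms, Finset.mem_filter, Finset.mem_range] at hk; omega
    have hysep : ∀ j k, j < n → k + 1 < n → (y j < mid k ↔ j ≤ k) := by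
      intro j k hj hk
      constructor
      · intro h
        by_contra h2
        push_neg at h2
        have h3 : y (k+1) ≤ y j := hyle (k+1) j hk hj (by omega)
        linarith [(hmidlt k hk).2]
      · intro h
        have h3 : y j ≤ y k := hyle j k hj (by omega) h
        linarith [(hmidlt k hk).1]
    have hmid_ne : ∀ j k, j < n → k + 1 < n → mid k ≠ y j := by
      intro j k hj hk
      rcases le_or_gt j k with h | h
      · exact (ne_of_gt ((hysep j k hj hk).mpr h))
      · have h3 : y (k+1) ≤ y j := hyle (k+1) j hk hj (by omega)
        exact ne_of_lt (lt_of_lt_of_le (hmidlt k hk).2 h3)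
    have hyinj : Set.InjOn y ↑(Zs n W) := by
      intro a ha a' ha' h
      have h1 := hZmem a (by simpa using ha)
      have h2 := hZmem a' (by simpa using ha')
      by_contra hne
      rcases Nat.lt_or_ge a a' with h3 | h3
      · exact absurd h (ne_of_lt ((hylt a a' h1 h2).mpr h3))
      · have h4 : a' < a := by omega
        exact absurd h.symm (ne_of_lt ((hylt a' a h2 h1).mpr h4))
    have hmidinj : Set.InjOn mid ↑(Ms n W b) := by
      intro a ha a' ha' h
      have h1 := hMmem a (by simpa using ha)
      have h2 := hMmem a' (by simpa using ha')
      by_contra hne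
      have key : ∀ u u', u + 1 < n → u' + 1 < n → u < u' → mid u < mid u' := by
        intro u u' hu hu' huu
        have : y (u+1) ≤ y u' := hyle (u+1) u' hu (by omega) (by omega)
        linarith [(hmidlt u hu).2, (hmidlt u' hu').1]
      rcases Nat.lt_or_ge a a' with h3 | h3
      · exact absurd h (ne_of_lt (key a a' h1 h2 h3))
      · exact absurd h.symm (ne_of_lt (key a' a h2 h1 (by omega)))
    have hdisjR : Disjoint ((Zs n W).image y) ((Ms n W b).image mid) := by
      rw [Finset.disjoint_right]
      intro ρ hρM hρZ
      obtain ⟨k, hk, rfl⟩ := Finset.mem_image.mp hρM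
      obtain ⟨j, hj, hjk⟩ := Finset.mem_image.mp hρZ
      exact hmid_ne j k (hZmem j hj) (hMmem k hk) hjk.symm
    set R : Finset ℝ := (Zs n W).image y ∪ (Ms n W b).image mid with hR
    have hRcard : R.card = (Zs n W).card + (Ms n W b).card := by
      rw [hR, Finset.card_union_of_disjoint hdisjR,
        Finset.card_image_of_injOn hyinj, Finset.card_image_of_injOn hmidinj]
    set ε := eps n W b with hεdef
    have hε : ε ≠ 0 := mul_ne_zero (pow_ne_zero _ (by decide)) hWb
    have hεR : (ε:ℝ) ≠ 0 := coe_ne_zero hε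
    refine ⟨Polynomial.C (ε:ℝ) * ∏ ρ ∈ R, (Polynomial.X - Polynomial.C ρ), ?_, ?_⟩
    · have hdeg : (Polynomial.C (ε:ℝ) * ∏ ρ ∈ R, (Polynomial.X - Polynomial.C ρ)).degree
          = (R.card : WithBot ℕ) := by
        rw [Polynomial.degree_mul, Polynomial.degree_C hεR, Polynomial.degree_prod]
        simp [Polynomial.degree_X_sub_C]
      rw [hdeg]
      exact_mod_cast lt_of_le_of_lt (le_trans (le_of_eq hRcard) hcard) hV
    · intro i
      have hyi := hy i
      rw [Polynomial.eval_mul, Polynomial.eval_C, Polynomial.eval_prod]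
      simp only [Polynomial.eval_sub, Polynomial.eval_X, Polynomial.eval_C]
      by_cases hVi : V i = 0
      · have hiZ : (i:ℕ) ∈ Zs n W := by
          rw [Zs, Finset.mem_filter, Finset.mem_range]
          exact ⟨i.isLt, by rw [hWV]; exact hVi⟩
        have hprod : (∏ ρ ∈ R, (x i - ρ)) = 0 := by
          apply Finset.prod_eq_zero
            (Finset.mem_union_left _ (Finset.mem_image_of_mem y hiZ))
          rw [hyi, sub_self]
        rw [hprod, mul_zero, sign_zero, hVi]
      · have hWi : W (i:ℕ) ≠ 0 := by rw [hWV]; exact hVi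
        have hxiR : ∀ ρ ∈ R, ρ ≠ x i := by
          intro ρ hρ
          rw [hR, Finset.mem_union] at hρ
          rcases hρ with hρ | hρ
          · obtain ⟨j, hj, rfl⟩ := Finset.mem_image.mp hρ
            have hjn := hZmem j hj
            intro h
            rw [← hyi] at h
            have hji : j = (i:ℕ) := by
              by_contra hne
              rcases Nat.lt_or_ge j (i:ℕ) with h3 | h3
              · exact absurd h (ne_of_lt ((hylt j i hjn i.isLt).mpr h3))
              · have h4 : (i:ℕ) < j := by omega
                exact absurd h.symm (ne_of_lt ((hylt i j i.isLt hjn).mpr h4))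
            rw [Zs, Finset.mem_filter] at hj
            exact hWi (hji ▸ hj.2)
          · obtain ⟨k, hk, rfl⟩ := Finset.mem_image.mp hρ
            rw [← hyi]
            exact hmid_ne _ _ i.isLt (hMmem k hk)
        rw [sign_mul, sign_coe, prod_sign R (x i) hxiR]
        have hcount : (R.filter fun ρ => x i < ρ).card
            = Zgt n W (i:ℕ) + Mge n W b (i:ℕ) := by
          rw [hR, Finset.filter_union,
            Finset.card_union_of_disjoint (Finset.disjoint_filter_filter hdisjR)]
          congr 1
          · rw [Finset.filter_image]
            rw [Finset.filter_congr (q := fun j => (i:ℕ) < j) ?_]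
            · rw [Finset.card_image_of_injOn
                (hyinj.mono (by exact_mod_cast Finset.filter_subset _ _))]
              rfl
            · intro j hj
              rw [← hyi, hylt (i:ℕ) j i.isLt (hZmem j hj)]
          · rw [Finset.filter_image]
            rw [Finset.filter_congr (q := fun k => (i:ℕ) ≤ k) ?_]
            · rw [Finset.card_image_of_injOn
                (hmidinj.mono (by exact_mod_cast Finset.filter_subset _ _))]
              rfl
            · intro k hk
              rw [← hyi, hysep (i:ℕ) k i.isLt (hMmem k hk)]
        rw [hcount, ← hWV i]
        exact hsc (i:ℕ) i.isLt hWi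
end

section
/- (Camion–Hoffman) Let A : Matrix (Fin n) (Fin n) ℝ have nonnegative entries. Then the following are equivalent: (1) every complex matrix B : Matrix (Fin n) (Fin n) ℂ with Complex.abs (B i j) = A i j for all i, j satisfies det B ≠ 0; (2) there exist a permutation σ of Fin n and a function d : Fin n → ℝ with d j ≥ 0 for all j such that for every i, A (σ i) i * d i > ∑_{j ≠ i} A (σ i) j * d j. -/
open Finset
set_option maxHeartbeats 1000000 in
/-- Given `w` of modulus `p`, there is `z` of modulus `a` with `|w - z| = c`,
provided `|p - a| ≤ c ≤ p + a`. -/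
lemma exists_on_circle (p a c : ℝ) (hp : 0 ≤ p) (ha : 0 ≤ a)
    (h1 : |p - a| ≤ c) (h2 : c ≤ p + a) (w : ℂ) (hw : ‖w‖ = p) :
    ∃ z : ℂ, ‖z‖ = a ∧ ‖(w - z)‖ = c := by
  have hc0 : 0 ≤ c := le_trans (abs_nonneg _) h1
  rcases eq_or_lt_of_le hp with hp0 | hp0
  · -- p = 0, so w = 0 and c = a
    have hw0 : w = 0 := by
      rw [← norm_eq_zero, hw, ← hp0]
    have hca : c = a := by
      rw [← hp0] at h1 h2
      have := abs_nonneg (0 - a)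
      rw [abs_sub_comm, sub_zero, abs_of_nonneg ha] at h1
      linarith
    refine ⟨(a : ℂ), by simp [abs_of_nonneg ha], ?_⟩
    rw [hw0, zero_sub, norm_neg, Complex.norm_real, Real.norm_eq_abs, abs_of_nonneg ha, hca]
  rcases eq_or_lt_of_le ha with ha0 | ha0
  · -- a = 0
    have hca : c = p := by
      rw [← ha0] at h1 h2
      rw [sub_zero, abs_of_nonneg hp] at h1
      linarith
    exact ⟨0, by simp [← ha0], by rw [sub_zero, hw, hca]⟩
  -- main case p, a > 0
  set t : ℝ := (p ^ 2 + a ^ 2 - c ^ 2) / (2 * p * a) with ht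
  have hpa : (0:ℝ) < 2 * p * a := by positivity
  have ht1 : -1 ≤ t := by
    rw [ht, le_div_iff₀ hpa]
    have hcsq : c ^ 2 ≤ (p + a) ^ 2 := by nlinarith
    nlinarith
  have ht2 : t ≤ 1 := by
    rw [div_le_one hpa]
    have hsq : (p - a) ^ 2 ≤ c ^ 2 := by
      have := pow_le_pow_left₀ (abs_nonneg (p - a)) h1 2
      rwa [sq_abs] at this
    nlinarith
  set θ := Real.arccos t with hθ
  have hcos : Real.cos θ = t := Real.cos_arccos ht1 ht2
  have hsin : Real.sin θ ^ 2 = 1 - t ^ 2 := by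
    rw [hθ, Real.sin_arccos, Real.sq_sqrt (by nlinarith)]
  set q : ℂ := ((a * Real.cos θ : ℝ) : ℂ) + ((a * Real.sin θ : ℝ) : ℂ) * Complex.I with hq
  have habsq : ‖q‖ = a := by
    have h := Complex.normSq_add_mul_I (a * Real.cos θ) (a * Real.sin θ)
    have h2 : (‖q‖) ^ 2 = a ^ 2 := by
      rw [← Complex.sq_norm] at h
      rw [hq, h]
      nlinarith [Real.sin_sq_add_cos_sq θ]
    nlinarith [norm_nonneg q]
  have hwne : (p : ℂ) ≠ 0 := by
    simp [ne_of_gt hp0]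
  have habsu : ‖(w / (p : ℂ))‖ = 1 := by
    rw [norm_div, hw, Complex.norm_real, Real.norm_eq_abs, abs_of_pos hp0, div_self (ne_of_gt hp0)]
  refine ⟨q * (w / (p : ℂ)), by rw [norm_mul, habsq, habsu, mul_one], ?_⟩
  have hw' : w - q * (w / (p : ℂ)) = ((p : ℂ) - q) * (w / (p : ℂ)) := by
    field_simp
  rw [hw', norm_mul, habsu, mul_one]
  have hdiff : (p : ℂ) - q = ((p - a * Real.cos θ : ℝ) : ℂ) + ((-(a * Real.sin θ) : ℝ) : ℂ) * Complex.I := by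
    rw [hq]
    push_cast
    ring
  have habs2 : (‖((p : ℂ) - q)‖) ^ 2
      = (p - a * Real.cos θ) ^ 2 + (-(a * Real.sin θ)) ^ 2 := by
    rw [hdiff, Complex.sq_norm, Complex.normSq_add_mul_I]
  have h2t : 2 * p * a * t = p ^ 2 + a ^ 2 - c ^ 2 := by
    rw [ht]; field_simp
  have hsq : (‖((p : ℂ) - q)‖) ^ 2 = c ^ 2 := by
    rw [habs2, hcos]
    linear_combination a ^ 2 * hsin - h2t
  nlinarith [norm_nonneg ((p : ℂ) - q)]


/-- Nonnegative reals satisfying the polygon inequality relative to `w` can be realized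
as moduli of complex numbers summing to `w`. -/
lemma polygon_sum : ∀ (m : ℕ) (a : Fin m → ℝ), (∀ j, 0 ≤ a j) →
    ∀ w : ℂ, ‖w‖ ≤ ∑ j, a j →
    (∀ j, 2 * a j ≤ (∑ k, a k) + ‖w‖) →
    ∃ z : Fin m → ℂ, (∀ j, ‖(z j)‖ = a j) ∧ ∑ j, z j = w := by
  intro m
  induction m with
  | zero =>
      intro a _ w hw _
      refine ⟨fun j => 0, fun j => j.elim0, ?_⟩
      have : w = 0 := by
        rw [← norm_eq_zero]
        exact le_antisymm (by simpa using hw) (norm_nonneg w)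
      simp [this]
  | succ m IH =>
      intro a hnn w hw hbal
      set aL := a (Fin.last m) with haL
      set a' : Fin m → ℝ := fun j => a j.castSucc with ha'
      set p := ‖w‖ with hp
      have hp0 : 0 ≤ p := norm_nonneg w
      have hss : ∑ j, a j = (∑ j, a' j) + aL := by
        rw [Fin.sum_univ_castSucc]
      set s' := ∑ j, a' j with hs'
      have hs'0 : 0 ≤ s' := Finset.sum_nonneg fun j _ => hnn _
      set cands : Finset ℝ :=
        insert (|p - aL|) (Finset.univ.image fun j : Fin m => 2 * a' j - s') with hcands
      have hcne : cands.Nonempty := ⟨_, Finset.mem_insert_self _ _⟩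
      set c := cands.max' hcne with hc
      have hc1 : |p - aL| ≤ c := by
        refine Finset.le_max' cands _ ?_
        rw [hcands]
        exact Finset.mem_insert_self _ _
      have hc2 : ∀ j, 2 * a' j - s' ≤ c := by
        intro j
        refine Finset.le_max' cands (2 * a' j - s') ?_
        rw [hcands]
        exact Finset.mem_insert_of_mem (Finset.mem_image.mpr ⟨j, Finset.mem_univ j, rfl⟩)
      have hub : ∀ x ∈ cands, x ≤ min (p + aL) s' := by
        intro x hx
        rcases Finset.mem_insert.mp hx with rfl | hx
        · refine le_min (abs_le.mpr ⟨by linarith [hnn (Fin.last m)], by linarith [hnn (Fin.last m)]⟩) ?_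
          have hL := hbal (Fin.last m)
          rw [hss] at hL hw
          exact abs_le.mpr ⟨by linarith, by linarith⟩
        · obtain ⟨j, -, rfl⟩ := Finset.mem_image.mp hx
          have hj := hbal j.castSucc
          rw [hss] at hj
          refine le_min (by linarith) ?_
          -- need a' j + aL ≤ ∑ a
          have hmem : j.castSucc ∈ Finset.univ.erase (Fin.last m) :=
            Finset.mem_erase.mpr ⟨(Fin.castSucc_lt_last j).ne, Finset.mem_univ _⟩
          have hle : a j.castSucc ≤ ∑ k ∈ Finset.univ.erase (Fin.last m), a k :=
            Finset.single_le_sum (fun k _ => hnn k) hmem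
          have hsplit : ∑ k ∈ Finset.univ.erase (Fin.last m), a k + a (Fin.last m) = ∑ k, a k :=
            Finset.sum_erase_add _ _ (Finset.mem_univ _)
          rw [hss] at hsplit
          simp only [ha'] at *
          linarith
      have hcmem := Finset.max'_mem _ hcne
      have hc3 : c ≤ p + aL := le_trans (hub c hcmem) (min_le_left _ _)
      have hc4 : c ≤ s' := le_trans (hub c hcmem) (min_le_right _ _)
      obtain ⟨zL, hzL1, hzL2⟩ :=
        exists_on_circle p aL c hp0 (hnn _) hc1 hc3 w rfl
      obtain ⟨z', hz1, hz2⟩ := IH a' (fun j => hnn _) (w - zL)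
        (by rw [hzL2]; exact hc4)
        (fun j => by rw [hzL2]; have := hc2 j; linarith)
      refine ⟨Fin.snoc z' zL, ?_, ?_⟩
      · intro j
        refine Fin.lastCases ?_ (fun i => ?_) j
        · rw [Fin.snoc_last, hzL1]
        · rw [Fin.snoc_castSucc, hz1 i]
      · rw [Fin.sum_univ_castSucc]
        simp only [Fin.snoc_castSucc, Fin.snoc_last]
        rw [hz2]
        ring

/-- **Berge's intersection theorem**: finitely many compact convex sets whose union is
convex and such that any all-but-one of them have a common point, have a common point. -/
lemma berge_inter {E ι : Type*} [NormedAddCommGroup E] [NormedSpace ℝ E] [DecidableEq ι] :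
    ∀ (m : ℕ) (s : Finset ι) (C : ι → Set E), s.card = m → 2 ≤ m →
    (∀ i ∈ s, Convex ℝ (C i)) → (∀ i ∈ s, IsCompact (C i)) →
    Convex ℝ (⋃ i ∈ s, C i) →
    (∀ j ∈ s, (⋂ i ∈ s.erase j, C i).Nonempty) →
    (⋂ i ∈ s, C i).Nonempty := by
  intro m
  induction m with
  | zero => intro s C hcard h2; omega
  | succ m IH =>
    intro s C hcard h2 hconv hcomp hunion hinter
    rcases Nat.lt_or_ge m 2 with hm | hm
    · -- base case : s.card = 2
      have hcard2 : s.card = 2 := by omega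
      obtain ⟨a, b, hab, rfl⟩ := Finset.card_eq_two.mp hcard2
      have hbmem : b ∈ ({a, b} : Finset ι).erase a :=
        Finset.mem_erase.mpr ⟨hab.symm, by simp⟩
      have hamem : a ∈ ({a, b} : Finset ι).erase b :=
        Finset.mem_erase.mpr ⟨hab, by simp⟩
      obtain ⟨x, hx⟩ := hinter a (by simp)
      obtain ⟨y, hy⟩ := hinter b (by simp)
      have hxb : x ∈ C b := by
        simp only [Set.mem_iInter] at hx; exact hx b hbmem
      have hya : y ∈ C a := by
        simp only [Set.mem_iInter] at hy; exact hy a hamem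
      -- y ∈ C a, x ∈ C b
      have hmemy : y ∈ ⋃ i ∈ ({a, b} : Finset ι), C i := by
        refine Set.mem_biUnion (by simp : a ∈ ({a,b} : Finset ι)) hya
      have hmemx : x ∈ ⋃ i ∈ ({a, b} : Finset ι), C i := by
        refine Set.mem_biUnion (by simp : b ∈ ({a,b} : Finset ι)) hxb
      have hseg : segment ℝ y x ⊆ C a ∪ C b := by
        intro z hz
        have := hunion.segment_subset hmemy hmemx hz
        simpa [Set.mem_iUnion] using this
      have hpc : IsPreconnected (segment ℝ y x) := (convex_segment y x).isPreconnected
      obtain ⟨z, hzseg, hza, hzb⟩ :=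
        isPreconnected_closed_iff.mp hpc (C a) (C b)
          (hcomp a (by simp)).isClosed (hcomp b (by simp)).isClosed hseg
          ⟨y, left_mem_segment ℝ y x, hya⟩ ⟨x, right_mem_segment ℝ y x, hxb⟩
      exact ⟨z, by simp only [Set.mem_iInter, Finset.mem_insert, Finset.mem_singleton]
                   rintro i (rfl | rfl)
                   exacts [hza, hzb]⟩
    · -- inductive step
      obtain ⟨p, hp⟩ : s.Nonempty := Finset.card_pos.mp (by omega)
      set t := s.erase p with htdef
      have hts : t ⊆ s := Finset.erase_subset _ _
      have htcard : t.card = m := by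
        rw [htdef, Finset.card_erase_of_mem hp, hcard]
        omega
      have htne : t.Nonempty := Finset.card_pos.mp (by omega)
      set C' := ⋂ i ∈ t, C i with hC'def
      have hC'ne : C'.Nonempty := hinter p hp
      have hC'conv : Convex ℝ C' :=
        convex_iInter fun i => convex_iInter fun hi => hconv i (hts hi)
      have hC'closed : IsClosed C' :=
        isClosed_biInter fun i hi => (hcomp i (hts hi)).isClosed
      obtain ⟨q, hq⟩ := htne
      have hC'comp : IsCompact C' :=
        (hcomp q (hts hq)).of_isClosed_subset hC'closed
          (Set.biInter_subset_of_mem hq)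
      by_cases hgoal : (⋂ i ∈ s, C i).Nonempty
      · exact hgoal
      exfalso
      have hempty : ⋂ i ∈ s, C i = ∅ := Set.not_nonempty_iff_eq_empty.mp hgoal
      have hdisj : Disjoint C' (C p) := by
        rw [Set.disjoint_left]
        intro x hxC' hxCp
        have : x ∈ ⋂ i ∈ s, C i := by
          rw [← Finset.insert_erase hp, Finset.set_biInter_insert]
          exact ⟨hxCp, hxC'⟩
        rw [hempty] at this
        exact this
      obtain ⟨f, u, v, hu, huv, hv⟩ :=
        geometric_hahn_banach_compact_closed hC'conv hC'comp (hconv p hp)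
          (hcomp p hp).isClosed hdisj
      set cmid := (u + v) / 2 with hcmid
      have hucm : u < cmid := by rw [hcmid]; linarith
      have hcmv : cmid < v := by rw [hcmid]; linarith
      set H : Set E := {x | f x = cmid} with hHdef
      have hHconv : Convex ℝ H := convex_hyperplane ⟨f.map_add, f.map_smul⟩ cmid
      have hHclosed : IsClosed H := isClosed_eq f.continuous continuous_const
      set D : ι → Set E := fun i => C i ∩ H with hDdef
      -- C p misses H
      have hCpH : ∀ x ∈ C p, x ∉ H := by
        intro x hx hxH
        have := hv x hx
        rw [hHdef] at hxH
        simp only [Set.mem_setOf_eq] at hxH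
        linarith
      -- apply induction to D on t
      have hDunion : Convex ℝ (⋃ i ∈ t, D i) := by
        have : (⋃ i ∈ t, D i) = (⋃ i ∈ s, C i) ∩ H := by
          ext x
          simp only [Set.mem_iUnion, Set.mem_inter_iff, hDdef]
          constructor
          · rintro ⟨i, hi, hxi, hxH⟩
            exact ⟨⟨i, hts hi, hxi⟩, hxH⟩
          · rintro ⟨⟨i, hi, hxi⟩, hxH⟩
            refine ⟨i, ?_, hxi, hxH⟩
            rcases eq_or_ne i p with rfl | hne
            · exact absurd hxH (hCpH x hxi)
            · exact Finset.mem_erase.mpr ⟨hne, hi⟩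
        rw [this]
        exact hunion.inter hHconv
      have hDinter : ∀ j ∈ t, (⋂ i ∈ t.erase j, D i).Nonempty := by
        intro j hj
        have hjs : j ∈ s := hts hj
        obtain ⟨x, hx⟩ := hinter j hjs
        simp only [Set.mem_iInter] at hx
        have hpj : p ∈ s.erase j := Finset.mem_erase.mpr
          ⟨fun h => (Finset.mem_erase.mp hj).1 h.symm, hp⟩
        have hxCp : x ∈ C p := hx p hpj
        obtain ⟨y, hy⟩ := hC'ne
        simp only [hC'def, Set.mem_iInter] at hy
        have hfy : f y < u := hu y (by rw [hC'def]; simp only [Set.mem_iInter]; exact hy)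
        have hfx : v < f x := hv x hxCp
        -- the convex set G
        set G := ⋂ i ∈ t.erase j, C i with hGdef
        have hGconv : Convex ℝ G :=
          convex_iInter fun i => convex_iInter fun hi =>
            hconv i (hts (Finset.mem_of_mem_erase hi))
        have hyG : y ∈ G := by
          simp only [hGdef, Set.mem_iInter]
          intro i hi
          exact hy i (Finset.mem_of_mem_erase hi)
        have hxG : x ∈ G := by
          simp only [hGdef, Set.mem_iInter]
          intro i hi
          have : i ∈ s.erase j := by
            have h1 := Finset.mem_erase.mp hi
            have h2 := Finset.mem_erase.mp (Finset.mem_of_mem_erase hi : i ∈ t)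
            exact Finset.mem_erase.mpr ⟨h1.1, h2.2⟩
          exact hx i this
        have hfxy : f y < f x := by linarith
        set α := (f x - cmid) / (f x - f y) with hα
        set β := (cmid - f y) / (f x - f y) with hβ
        have hfxyne : f x - f y > 0 := by linarith
        have hα0 : 0 ≤ α := div_nonneg (by linarith) (by linarith)
        have hβ0 : 0 ≤ β := div_nonneg (by linarith) (by linarith)
        have hαβ : α + β = 1 := by
          rw [hα, hβ]
          field_simp
          ring
        set z := α • y + β • x with hz
        have hzG : z ∈ G := hGconv hyG hxG hα0 hβ0 hαβ
        have hzH : z ∈ H := by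
          rw [hHdef]
          simp only [Set.mem_setOf_eq, hz, map_add, map_smul, smul_eq_mul]
          rw [hα, hβ]
          field_simp
          ring
        refine ⟨z, ?_⟩
        simp only [Set.mem_iInter, hDdef]
        intro i hi
        refine ⟨?_, hzH⟩
        simp only [hGdef, Set.mem_iInter] at hzG
        exact hzG i hi
      obtain ⟨w, hw⟩ := IH t D htcard hm
        (fun i hi => (hconv i (hts hi)).inter hHconv)
        (fun i hi => (hcomp i (hts hi)).inter_right hHclosed)
        hDunion hDinter
      simp only [Set.mem_iInter, hDdef] at hw
      have hwC' : w ∈ C' := by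
        rw [hC'def]
        simp only [Set.mem_iInter]
        exact fun i hi => (hw i hi).1
      have hwH : w ∈ H := (hw q hq).2
      have h1 := hu w hwC'
      rw [hHdef] at hwH
      simp only [Set.mem_setOf_eq] at hwH
      linarith


/-- (Camion–Hoffman) For a square matrix `A` with nonnegative real entries, every complex
matrix whose entrywise absolute values are given by `A` is nonsingular iff the rows of `A`
can be permuted and the columns scaled by nonnegative reals so that the result is strictly
diagonally dominant. -/
theorem camion_hoffman
    (n : ℕ) (A : Matrix (Fin n) (Fin n) ℝ) (hA : ∀ i j, 0 ≤ A i j) :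
    (∀ B : Matrix (Fin n) (Fin n) ℂ,
        (∀ i j, ‖B i j‖ = A i j) → B.det ≠ 0) ↔
    ∃ (σ : Equiv.Perm (Fin n)) (d : Fin n → ℝ), (∀ j, 0 ≤ d j) ∧
      ∀ i, ∑ j ∈ Finset.univ.erase i, A (σ i) j * d j < A (σ i) i * d i := by
  classical
  constructor
  · -- hard direction
    intro h1
    by_contra hcon
    push_neg at hcon
    rcases Nat.lt_or_ge n 2 with hn | hn
    · interval_cases n
      · obtain ⟨i, -⟩ := hcon 1 (fun _ => 0) (fun j => le_rfl)
        exact i.elim0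
      · -- n = 1
        have hA00 : A 0 0 ≠ 0 := by
          have hdet := h1 (fun i j => ((A i j : ℝ) : ℂ) : Matrix (Fin 1) (Fin 1) ℂ)
            (fun i j => by rw [Complex.norm_real, Real.norm_eq_abs, abs_of_nonneg (hA i j)])
          erw [Matrix.det_fin_one] at hdet
          exact fun h => hdet (by rw [h, Complex.ofReal_zero])
        have hpos : 0 < A 0 0 := lt_of_le_of_ne (hA 0 0) (Ne.symm hA00)
        obtain ⟨i, hi⟩ := hcon 1 (fun _ => 1) (fun j => zero_le_one)
        have hie : Finset.univ.erase i = (∅ : Finset (Fin 1)) := by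
          rw [Finset.eq_empty_iff_forall_notMem]
          intro j hj
          exact (Finset.mem_erase.mp hj).1 (Subsingleton.elim j i)
        rw [hie] at hi
        simp only [Finset.sum_empty, Equiv.Perm.one_apply, mul_one] at hi
        have : i = 0 := Subsingleton.elim i 0
        rw [this] at hi
        linarith
    · -- n ≥ 2
      set S := stdSimplex ℝ (Fin n) with hS
      set F : Fin n → Set (Fin n → ℝ) := fun j =>
        S ∩ ⋂ i : Fin n, {x | 2 * A i j * x j ≤ ∑ k, A i k * x k} with hF
      have hmemF : ∀ j x, x ∈ F j ↔
          x ∈ S ∧ ∀ i, 2 * A i j * x j ≤ ∑ k, A i k * x k := by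
        intro j x
        rw [hF]
        simp [Set.mem_iInter]
      have hFconv : ∀ j ∈ (univ : Finset (Fin n)), Convex ℝ (F j) := by
        intro j _
        refine (convex_stdSimplex ℝ _).inter (convex_iInter fun i => ?_)
        have hlin : IsLinearMap ℝ
            (fun x : Fin n → ℝ => 2 * A i j * x j - ∑ k, A i k * x k) := by
          constructor
          · intro x y
            simp only [Pi.add_apply, mul_add]
            rw [Finset.sum_add_distrib]
            ring
          · intro c x
            simp only [Pi.smul_apply, smul_eq_mul]
            rw [mul_sub, Finset.mul_sum]
            congr 1
            · ring
            · exact Finset.sum_congr rfl fun k _ => by ring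
        have heq : {x : Fin n → ℝ | 2 * A i j * x j ≤ ∑ k, A i k * x k}
            = {x | (fun x : Fin n → ℝ => 2 * A i j * x j - ∑ k, A i k * x k) x ≤ 0} := by
          ext x
          simp [sub_nonpos]
        rw [heq]
        exact convex_halfSpace_le hlin 0
      have hFcomp : ∀ j ∈ (univ : Finset (Fin n)), IsCompact (F j) := by
        intro j _
        have hcl : IsClosed (F j) := by
          rw [hF]
          refine (isClosed_stdSimplex ℝ _).inter (isClosed_iInter fun i => ?_)
          refine isClosed_le ?_ ?_
          · exact continuous_const.mul (continuous_apply j)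
          · exact continuous_finset_sum _ fun k _ => continuous_const.mul (continuous_apply k)
        exact (isCompact_stdSimplex ℝ _).of_isClosed_subset hcl
          (by rw [hF]; exact Set.inter_subset_left)
      have hcover : ∀ x ∈ S, x ∈ ⋃ j ∈ (univ : Finset (Fin n)), F j := by
        intro x hxS
        by_contra hx
        simp only [Set.mem_iUnion, Finset.mem_univ, exists_prop, true_and, not_exists] at hx
        have hx0 : ∀ k, 0 ≤ x k := hxS.1
        have hx' : ∀ j, ∃ i, ∑ k, A i k * x k < 2 * A i j * x j := by
          intro j
          have hj := hx j
          rw [hmemF] at hj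
          push_neg at hj
          exact hj hxS
        choose r hr using hx'
        have hinj : Function.Injective r := by
          intro j j' he
          by_contra hne
          have t1 := hr j
          have t2 := hr j'
          rw [he] at t1
          have hpair : A (r j') j * x j + A (r j') j' * x j' ≤ ∑ k, A (r j') k * x k := by
            have hsub : ({j, j'} : Finset (Fin n)) ⊆ univ := Finset.subset_univ _
            have hmono := Finset.sum_le_sum_of_subset_of_nonneg
              (f := fun k => A (r j') k * x k) hsub
              (fun k _ _ => mul_nonneg (hA (r j') k) (hx0 k))
            rwa [Finset.sum_pair hne] at hmono
          linarith
        have hbij := Finite.injective_iff_bijective.mp hinj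
        obtain ⟨i0, hi0⟩ := hcon (Equiv.ofBijective r hbij) x hx0
        have hr0 := hr i0
        have hsplit : A (r i0) i0 * x i0 + ∑ k ∈ univ.erase i0, A (r i0) k * x k
            = ∑ k, A (r i0) k * x k :=
          Finset.add_sum_erase univ (fun k => A (r i0) k * x k) (Finset.mem_univ i0)
        have hσ : (Equiv.ofBijective r hbij) i0 = r i0 := rfl
        rw [hσ] at hi0
        linarith
      have hUconv : Convex ℝ (⋃ j ∈ (univ : Finset (Fin n)), F j) := by
        have hUeq : (⋃ j ∈ (univ : Finset (Fin n)), F j) = S := by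
          apply Set.Subset.antisymm
          · intro x hx
            simp only [Set.mem_iUnion] at hx
            obtain ⟨j, -, hj⟩ := hx
            exact ((hmemF j x).mp hj).1
          · intro x hx
            exact hcover x hx
        rw [hUeq]
        exact convex_stdSimplex ℝ _
      have hvert : ∀ j ∈ (univ : Finset (Fin n)),
          (⋂ i ∈ univ.erase j, F i).Nonempty := by
        intro j _
        refine ⟨fun k => if k = j then 1 else 0, ?_⟩
        simp only [Set.mem_iInter]
        intro i hi
        have hij : i ≠ j := (Finset.mem_erase.mp hi).1
        rw [hmemF]
        have hsum1 : ∀ b : Fin n → ℝ, ∑ k, b k * (if k = j then (1:ℝ) else 0) = b j := by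
          intro b
          rw [Finset.sum_eq_single j]
          · simp
          · intro k _ hk; simp [hk]
          · intro h; exact absurd (Finset.mem_univ j) h
        refine ⟨⟨fun k => by dsimp only; split <;> norm_num, ?_⟩, ?_⟩
        · rw [Finset.sum_eq_single j]
          · simp
          · intro k _ hk; simp [hk]
          · intro h; exact absurd (Finset.mem_univ j) h
        · intro s
          rw [hsum1 (A s)]
          simp [hij, hA s j]
      obtain ⟨d, hd⟩ := berge_inter n univ F (by simp) hn hFconv hFcomp hUconv hvert
      simp only [Set.mem_iInter] at hd
      have hd' : ∀ j, d ∈ F j := fun j => hd j (Finset.mem_univ j)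
      have hdS : d ∈ S := ((hmemF ⟨0, by omega⟩ d).mp (hd' ⟨0, by omega⟩)).1
      have hd0 : ∀ k, 0 ≤ d k := hdS.1
      have hbal : ∀ i j, 2 * (A i j * d j) ≤ ∑ k, A i k * d k := by
        intro i j
        have := ((hmemF j d).mp (hd' j)).2 i
        linarith [this]
      have hrow : ∀ i, ∃ z : Fin n → ℂ,
          (∀ k, ‖(z k)‖ = A i k * d k) ∧ ∑ k, z k = 0 := by
        intro i
        exact polygon_sum n (fun k => A i k * d k)
          (fun k => mul_nonneg (hA i k) (hd0 k)) 0
          (by simpa using Finset.sum_nonneg fun k _ => mul_nonneg (hA i k) (hd0 k))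
          (fun j => by simpa using hbal i j)
      choose z hz1 hz2 using hrow
      set B : Matrix (Fin n) (Fin n) ℂ :=
        fun i k => if d k = 0 then ((A i k : ℝ) : ℂ) else z i k / (d k : ℂ) with hBdef
      have hBabs : ∀ i k, ‖(B i k)‖ = A i k := by
        intro i k
        rw [hBdef]
        by_cases hk : d k = 0
        · simp [hk, abs_of_nonneg (hA i k)]
        · simp only [hk, if_false]
          rw [norm_div, hz1, Complex.norm_real, Real.norm_eq_abs, abs_of_nonneg (hd0 k),
            mul_div_assoc, div_self hk, mul_one]
      have hker : B.mulVec (fun k => (d k : ℂ)) = 0 := by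
        funext i
        simp only [Matrix.mulVec, dotProduct, Pi.zero_apply]
        rw [← hz2 i]
        refine Finset.sum_congr rfl fun k _ => ?_
        by_cases hk : d k = 0
        · have hzk : z i k = 0 := by
            rw [← norm_eq_zero, hz1, hk, mul_zero]
          rw [hBdef]
          simp [hk, hzk]
        · rw [hBdef]
          simp only [hk, if_false]
          rw [div_mul_cancel₀]
          exact Complex.ofReal_ne_zero.mpr hk
      have hxne : (fun k => (d k : ℂ)) ≠ 0 := by
        intro h0
        have hall : ∀ k, d k = 0 := by
          intro k
          have := congrFun h0 k
          simpa using this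
        have := hdS.2
        simp [hall] at this
      have hdet : B.det = 0 := Matrix.exists_mulVec_eq_zero_iff.mp ⟨_, hxne, hker⟩
      exact h1 B hBabs hdet
  · -- easy direction
    rintro ⟨σ, d, hd0, hdom⟩ B hB
    have hdpos : ∀ i, 0 < d i := by
      intro i
      have h0 := hdom i
      have hsum : 0 ≤ ∑ j ∈ univ.erase i, A (σ i) j * d j :=
        Finset.sum_nonneg fun j _ => mul_nonneg (hA _ _) (hd0 j)
      have hpos : 0 < A (σ i) i * d i := lt_of_le_of_lt hsum h0
      rcases (hd0 i).lt_or_eq with h | h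
      · exact h
      · rw [← h, mul_zero] at hpos
        exact absurd hpos (lt_irrefl 0)
    set v : Fin n → ℂ := fun j => (d j : ℂ) with hv
    set C : Matrix (Fin n) (Fin n) ℂ := (B * Matrix.diagonal v).submatrix σ id with hC
    have hnorm : ∀ i j, ‖C i j‖ = A (σ i) j * d j := by
      intro i j
      rw [hC]
      simp only [Matrix.submatrix_apply, Matrix.mul_diagonal, id_eq]
      rw [norm_mul, hB, hv, Complex.norm_real, Real.norm_eq_abs,
        abs_of_nonneg (hd0 j)]
    have hdet : C.det ≠ 0 := by
      apply det_ne_zero_of_sum_row_lt_diag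
      intro k
      rw [hnorm k k]
      calc ∑ j ∈ univ.erase k, ‖C k j‖ = ∑ j ∈ univ.erase k, A (σ k) j * d j :=
            Finset.sum_congr rfl fun j _ => hnorm k j
        _ < A (σ k) k * d k := hdom k
    intro hB0
    apply hdet
    rw [hC, Matrix.det_permute, Matrix.det_mul, hB0, zero_mul, mul_zero]
end

section
/- Let A : Matrix (Fin n) (Fin n) ℝ have nonnegative entries. Then every complex matrix B : Matrix (Fin n) (Fin n) ℂ with Complex.abs (B i j) = A i j for all i, j satisfies det B ≠ 0 if and only if there does NOT exist c : Fin n → ℝ with c j ≥ 0 for all j, c not identically zero, such that for every row i and every index j₀, c j₀ * A i j₀ ≤ ∑_{j ≠ j₀} c j * A i j. -/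
open Finset

lemma triangle_lift (a b c : ℝ) (ha : 0 < a) (hb : 0 ≤ b) (hc : 0 ≤ c)
    (h1 : a ≤ b + c) (h2 : b ≤ a + c) (h3 : c ≤ a + b) :
    ∃ y z : ℂ, ‖y‖ = b ∧ ‖z‖ = c ∧ (a : ℂ) + y + z = 0 := by
  set p : ℝ := (c^2 - a^2 - b^2) / (2*a) with hp
  have hcu : c^2 ≤ (a+b)^2 := by nlinarith
  have hcl : (a-b)^2 ≤ c^2 := by
    nlinarith [mul_nonneg (by linarith : (0:ℝ) ≤ c - a + b) (by linarith : (0:ℝ) ≤ c + a - b)]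
  have hpb : p^2 ≤ b^2 := by
    rw [hp, div_pow, div_le_iff₀ (by positivity)]
    nlinarith [mul_nonneg (sub_nonneg.2 hcu) (sub_nonneg.2 hcl)]
  have h2ap : 2*a*p = c^2 - a^2 - b^2 := by
    rw [hp]; field_simp
  set q : ℝ := Real.sqrt (b^2 - p^2) with hqdef
  have hq0 : 0 ≤ q := Real.sqrt_nonneg _
  have hq : q^2 = b^2 - p^2 := Real.sq_sqrt (by linarith)
  refine ⟨(p:ℂ) + (q:ℂ) * Complex.I, -((a:ℂ) + ((p:ℂ) + (q:ℂ) * Complex.I)), ?_, ?_, by ring⟩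
  · rw [Complex.norm_add_mul_I]
    have : p^2 + q^2 = b^2 := by linarith
    rw [this, Real.sqrt_sq hb]
  · rw [norm_neg]
    have he : (a:ℂ) + ((p:ℂ) + (q:ℂ) * Complex.I) = ((a+p:ℝ):ℂ) + (q:ℝ) * Complex.I := by
      push_cast; ring
    rw [he, Complex.norm_add_mul_I]
    have : (a+p)^2 + q^2 = c^2 := by nlinarith
    rw [this, Real.sqrt_sq hc]

lemma polygon_lift (k : ℕ) : ∀ (n : ℕ) (r : Fin n → ℝ),
    (Finset.univ.filter fun j => r j ≠ 0).card ≤ k →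
    (∀ j, 0 ≤ r j) →
    (∀ j, 2 * r j ≤ ∑ j, r j) →
    ∃ z : Fin n → ℂ, (∀ j, ‖z j‖ = r j) ∧ ∑ j, z j = 0 := by
  induction k with
  | zero =>
    intro n r hcard h0 hpoly
    have hall : ∀ j, r j = 0 := by
      intro j
      by_contra hj
      have : j ∈ Finset.univ.filter fun j => r j ≠ 0 := by simp [hj]
      have := Finset.card_pos.2 ⟨j, this⟩
      omega
    exact ⟨0, fun j => by simp [hall j], by simp⟩
  | succ k ih =>
    intro n r hcard h0 hpoly
    set T := Finset.univ.filter fun j => r j ≠ 0 with hT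
    have hmemT : ∀ j, j ∈ T ↔ r j ≠ 0 := by intro j; simp [hT]
    have hzero : ∀ j, j ∉ T → r j = 0 := by
      intro j hj; by_contra h; exact hj ((hmemT j).2 h)
    have hTsum : ∑ j ∈ T, r j = ∑ j, r j := Finset.sum_filter_ne_zero _
    obtain hc | hc | hc | hc | hc :
        T.card = 0 ∨ T.card = 1 ∨ T.card = 2 ∨ T.card = 3 ∨ 4 ≤ T.card := by omega
    · -- all zero
      have hall : ∀ j, r j = 0 := by
        intro j
        apply hzero
        rw [Finset.card_eq_zero.mp hc]
        exact notMem_empty j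
      exact ⟨0, fun j => by simp [hall j], by simp⟩
    · -- impossible
      obtain ⟨j₁, hTeq⟩ := Finset.card_eq_one.mp hc
      have hS : ∑ j, r j = r j₁ := by rw [← hTsum, hTeq, Finset.sum_singleton]
      have h1 : r j₁ ≠ 0 := (hmemT j₁).1 (hTeq ▸ mem_singleton_self j₁)
      have := hpoly j₁
      rw [hS] at this
      exact absurd (le_antisymm (by linarith) (h0 j₁)) h1
    · -- two equal values
      obtain ⟨j₁, j₂, hne12, hTeq⟩ := Finset.card_eq_two.mp hc
      have hS : ∑ j, r j = r j₁ + r j₂ := by rw [← hTsum, hTeq, Finset.sum_pair hne12]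
      have heq : r j₁ = r j₂ := by
        have h1 := hpoly j₁; have h2 := hpoly j₂; rw [hS] at h1 h2; linarith
      set w : Fin n → ℂ :=
        Function.update (Function.update (0 : Fin n → ℂ) j₁ ((r j₁ : ℝ) : ℂ)) j₂
          (-((r j₁ : ℝ) : ℂ)) with hw
      have hw1 : w j₁ = ((r j₁ : ℝ) : ℂ) := by
        rw [hw, Function.update_of_ne hne12, Function.update_self]
      have hw2 : w j₂ = -((r j₁ : ℝ) : ℂ) := by rw [hw, Function.update_self]
      have hwo : ∀ j, j ≠ j₁ → j ≠ j₂ → w j = 0 := by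
        intro j h1 h2
        rw [hw, Function.update_of_ne h2, Function.update_of_ne h1]
        rfl
      refine ⟨w, ?_, ?_⟩
      · intro j
        rcases eq_or_ne j j₁ with rfl | hj1
        · rw [hw1, Complex.norm_real, Real.norm_eq_abs, abs_of_nonneg (h0 j)]
        · rcases eq_or_ne j j₂ with rfl | hj2
          · rw [hw2, norm_neg, Complex.norm_real, Real.norm_eq_abs, abs_of_nonneg (h0 j₁), heq]
          · rw [hwo j hj1 hj2, norm_zero]
            exact (hzero j (by rw [hTeq]; simp [hj1, hj2])).symm
      · rw [← Finset.sum_subset (Finset.subset_univ ({j₁, j₂} : Finset (Fin n)))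
          (fun x _ hx => by
            simp only [mem_insert, mem_singleton, not_or] at hx
            exact hwo x hx.1 hx.2)]
        rw [Finset.sum_pair hne12, hw1, hw2]
        ring
    · -- triangle case
      obtain ⟨j₁, j₂, j₃, h12, h13, h23, hTeq⟩ := Finset.card_eq_three.mp hc
      have hS : ∑ j, r j = r j₁ + (r j₂ + r j₃) := by
        rw [← hTsum, hTeq]
        rw [show ({j₁, j₂, j₃} : Finset (Fin n)) = insert j₁ {j₂, j₃} from rfl,
          Finset.sum_insert (by simp [h12, h13]), Finset.sum_pair h23]
      have ha : 0 < r j₁ :=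
        lt_of_le_of_ne (h0 j₁) (Ne.symm ((hmemT j₁).1 (hTeq ▸ by simp)))
      have hp1 := hpoly j₁; have hp2 := hpoly j₂; have hp3 := hpoly j₃
      rw [hS] at hp1 hp2 hp3
      obtain ⟨y, zc, hy, hzc, hsum0⟩ := triangle_lift (r j₁) (r j₂) (r j₃) ha (h0 j₂) (h0 j₃)
        (by linarith) (by linarith) (by linarith)
      set w : Fin n → ℂ :=
        Function.update (Function.update
          (Function.update (0 : Fin n → ℂ) j₁ ((r j₁ : ℝ) : ℂ)) j₂ y) j₃ zc with hw
      have hw1 : w j₁ = ((r j₁ : ℝ) : ℂ) := by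
        rw [hw, Function.update_of_ne h13, Function.update_of_ne h12, Function.update_self]
      have hw2 : w j₂ = y := by
        rw [hw, Function.update_of_ne h23, Function.update_self]
      have hw3 : w j₃ = zc := by rw [hw, Function.update_self]
      have hwo : ∀ j, j ≠ j₁ → j ≠ j₂ → j ≠ j₃ → w j = 0 := by
        intro j h1 h2 h3
        rw [hw, Function.update_of_ne h3, Function.update_of_ne h2,
          Function.update_of_ne h1]
        rfl
      refine ⟨w, ?_, ?_⟩
      · intro j
        rcases eq_or_ne j j₁ with rfl | hj1
        · rw [hw1, Complex.norm_real, Real.norm_eq_abs, abs_of_nonneg (h0 j)]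
        · rcases eq_or_ne j j₂ with rfl | hj2
          · rw [hw2, hy]
          · rcases eq_or_ne j j₃ with rfl | hj3
            · rw [hw3, hzc]
            · rw [hwo j hj1 hj2 hj3, norm_zero]
              exact (hzero j (by rw [hTeq]; simp [hj1, hj2, hj3])).symm
      · rw [← Finset.sum_subset (Finset.subset_univ ({j₁, j₂, j₃} : Finset (Fin n)))
          (fun x _ hx => by
            simp only [mem_insert, mem_singleton, not_or] at hx
            exact hwo x hx.1 hx.2.1 hx.2.2)]
        rw [show ({j₁, j₂, j₃} : Finset (Fin n)) = insert j₁ {j₂, j₃} from rfl,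
          Finset.sum_insert (by simp [h12, h13]), Finset.sum_pair h23,
          hw1, hw2, hw3, ← add_assoc]
        exact hsum0
    · -- merge the two smallest nonzero values
      have hTne : T.Nonempty := Finset.card_pos.mp (by omega)
      obtain ⟨j₁, hj₁T, hj₁min⟩ := T.exists_min_image r hTne
      have hT'ne : (T.erase j₁).Nonempty :=
        Finset.card_pos.mp (by rw [Finset.card_erase_of_mem hj₁T]; omega)
      obtain ⟨j₂, hj₂T', hj₂min⟩ := (T.erase j₁).exists_min_image r hT'ne
      have hj₂T : j₂ ∈ T := mem_of_mem_erase hj₂T'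
      have hne : j₂ ≠ j₁ := ne_of_mem_erase hj₂T'
      have ha0 : 0 < r j₁ := lt_of_le_of_ne (h0 j₁) (Ne.symm ((hmemT j₁).1 hj₁T))
      have hb0 : 0 < r j₂ := lt_of_le_of_ne (h0 j₂) (Ne.symm ((hmemT j₂).1 hj₂T))
      have hab : r j₁ ≤ r j₂ := hj₁min j₂ hj₂T
      set r' := Function.update (Function.update r j₂ 0) j₁ (r j₁ + r j₂) with hr'
      have hr'j₁ : r' j₁ = r j₁ + r j₂ := by simp [hr']
      have hr'j₂ : r' j₂ = 0 := by
        rw [hr', Function.update_of_ne hne, Function.update_self]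
      have hr'other : ∀ j, j ≠ j₁ → j ≠ j₂ → r' j = r j := by
        intro j hj1 hj2
        rw [hr', Function.update_of_ne hj1, Function.update_of_ne hj2]
      have hj₂mem : j₂ ∈ Finset.univ.erase j₁ := by simp [hne]
      have hsum1 := Finset.sum_update_of_mem (Finset.mem_univ j₁)
        (Function.update r j₂ 0) (r j₁ + r j₂)
      have hsum2 := Finset.sum_update_of_mem hj₂mem r (0 : ℝ)
      rw [← Finset.erase_eq] at hsum1 hsum2
      have hsum3 : ∑ j, r j = r j₁ + ∑ j ∈ univ.erase j₁, r j :=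
        (Finset.add_sum_erase _ _ (mem_univ j₁)).symm
      have hsum4 : ∑ j ∈ univ.erase j₁, r j
          = r j₂ + ∑ j ∈ (univ.erase j₁).erase j₂, r j :=
        (Finset.add_sum_erase _ _ hj₂mem).symm
      have hSS : ∑ j, r' j = ∑ j, r j := by
        simp only [hr']
        rw [hsum1, hsum2, hsum3, hsum4]; ring
      -- lower bounds on the rest
      have hrestcard : ((T.erase j₁).erase j₂).card = T.card - 2 := by
        rw [Finset.card_erase_of_mem hj₂T', Finset.card_erase_of_mem hj₁T]
        omega
      have hrestsum : 2 * r j₂ ≤ ∑ j ∈ (T.erase j₁).erase j₂, r j := by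
        have h1 : ((T.erase j₁).erase j₂).card • r j₂ ≤ ∑ j ∈ (T.erase j₁).erase j₂, r j :=
          Finset.card_nsmul_le_sum _ _ _ (fun j hj => hj₂min j (mem_of_mem_erase hj))
        rw [nsmul_eq_mul] at h1
        have h2 : (2 : ℝ) ≤ ((T.erase j₁).erase j₂).card := by
          rw [hrestcard]
          have : (2 : ℕ) ≤ T.card - 2 := by omega
          exact_mod_cast this
        nlinarith
      have hTsplit : ∑ j ∈ T, r j = r j₁ + (r j₂ + ∑ j ∈ (T.erase j₁).erase j₂, r j) := by
        rw [Finset.add_sum_erase _ r hj₂T', Finset.add_sum_erase _ r hj₁T]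
      have hSbig : 2 * (r j₁ + r j₂) ≤ ∑ j, r j := by
        rw [← hTsum, hTsplit]; linarith
      have hSnn : (0 : ℝ) ≤ ∑ j, r j := Finset.sum_nonneg fun j _ => h0 j
      -- apply the inductive hypothesis
      obtain ⟨z', hz'abs, hz'sum⟩ := ih n r'
        (by
          have hsub : (Finset.univ.filter fun j => r' j ≠ 0) ⊆ T.erase j₂ := by
            intro j hj
            simp only [Finset.mem_filter, mem_univ, true_and] at hj
            rcases eq_or_ne j j₂ with rfl | hjj2
            · exact absurd hr'j₂ hj
            · rcases eq_or_ne j j₁ with rfl | hjj1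
              · exact Finset.mem_erase.2 ⟨hne.symm, hj₁T⟩
              · refine Finset.mem_erase.2 ⟨hjj2, (hmemT j).2 ?_⟩
                rwa [← hr'other j hjj1 hjj2]
          have := Finset.card_le_card hsub
          rw [Finset.card_erase_of_mem hj₂T] at this
          omega)
        (by
          intro j
          rcases eq_or_ne j j₁ with rfl | hjj1
          · rw [hr'j₁]; positivity
          · rcases eq_or_ne j j₂ with rfl | hjj2
            · rw [hr'j₂]
            · rw [hr'other j hjj1 hjj2]; exact h0 j)
        (by
          intro j
          rw [hSS]
          rcases eq_or_ne j j₁ with rfl | hjj1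
          · rw [hr'j₁]; exact hSbig
          · rcases eq_or_ne j j₂ with rfl | hjj2
            · rw [hr'j₂]; linarith
            · rw [hr'other j hjj1 hjj2]; exact hpoly j)
      have hz'j₂ : z' j₂ = 0 := by
        have := hz'abs j₂
        rw [hr'j₂] at this
        exact norm_eq_zero.mp this
      have habpos : (0 : ℝ) < r j₁ + r j₂ := by linarith
      set u : ℂ := z' j₁ / ((r j₁ + r j₂ : ℝ) : ℂ) with hu
      have habsu : ‖u‖ = 1 := by
        rw [hu, norm_div, hz'abs j₁, hr'j₁, Complex.norm_real, Real.norm_eq_abs,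
          abs_of_pos habpos, div_self (ne_of_gt habpos)]
      have hz'j₁ : z' j₁ = ((r j₁ + r j₂ : ℝ) : ℂ) * u := by
        rw [hu, mul_div_cancel₀]
        exact_mod_cast ne_of_gt habpos
      refine ⟨Function.update (Function.update z' j₂ ((r j₂ : ℂ) * u)) j₁ ((r j₁ : ℂ) * u),
        ?_, ?_⟩
      · intro j
        rcases eq_or_ne j j₁ with rfl | hjj1
        · rw [Function.update_self, norm_mul, habsu, Complex.norm_real, Real.norm_eq_abs,
            abs_of_pos ha0, mul_one]
        · rw [Function.update_of_ne hjj1]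
          rcases eq_or_ne j j₂ with rfl | hjj2
          · rw [Function.update_self, norm_mul, habsu, Complex.norm_real, Real.norm_eq_abs,
              abs_of_pos hb0, mul_one]
          · rw [Function.update_of_ne hjj2, hz'abs j, hr'other j hjj1 hjj2]
      · have hzsum1 := Finset.sum_update_of_mem (Finset.mem_univ j₁)
          (Function.update z' j₂ ((r j₂ : ℂ) * u)) ((r j₁ : ℂ) * u)
        have hzsum2 := Finset.sum_update_of_mem hj₂mem z' ((r j₂ : ℂ) * u)
        rw [← Finset.erase_eq] at hzsum1 hzsum2
        rw [hzsum1, hzsum2]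
        have hz'split : z' j₁ + (z' j₂ + ∑ j ∈ (univ.erase j₁).erase j₂, z' j) = 0 := by
          rw [Finset.add_sum_erase _ _ hj₂mem, Finset.add_sum_erase _ _ (mem_univ j₁)]
          exact hz'sum
        rw [hz'j₂, hz'j₁] at hz'split
        push_cast at hz'split ⊢
        linear_combination hz'split

/-- For a square matrix `A` with nonnegative real entries, every complex matrix whose
entrywise absolute values are given by `A` is nonsingular iff there is no nonnegative, not
identically zero, scaling `c` of the columns such that in every row each scaled entry is at
most the sum of the other scaled entries (i.e. the columns of `A` are linearly independent
over the triangle hyperfield). -/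
theorem abs_pattern_nonsingular_iff_no_polygon_relation
    (n : ℕ) (A : Matrix (Fin n) (Fin n) ℝ) (hA : ∀ i j, 0 ≤ A i j) :
    (∀ B : Matrix (Fin n) (Fin n) ℂ,
        (∀ i j, ‖B i j‖ = A i j) → B.det ≠ 0) ↔
    ¬ ∃ c : Fin n → ℝ, (∀ j, 0 ≤ c j) ∧ c ≠ 0 ∧
        ∀ i j₀, c j₀ * A i j₀ ≤ ∑ j ∈ Finset.univ.erase j₀, c j * A i j := by
  constructor
  · -- if all lifts nonsingular, no polygon relation
    rintro hB ⟨c, hc0, hcne, hcpoly⟩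
    -- build a singular lift
    have hlift : ∀ i : Fin n, ∃ w : Fin n → ℂ,
        (∀ j, ‖w j‖ = c j * A i j) ∧ ∑ j, w j = 0 := by
      intro i
      apply polygon_lift n n (fun j => c j * A i j)
      · exact le_trans (Finset.card_filter_le _ _) (by simp)
      · exact fun j => mul_nonneg (hc0 j) (hA i j)
      · intro j₀
        have := hcpoly i j₀
        have hsplit : ∑ j, c j * A i j
            = c j₀ * A i j₀ + ∑ j ∈ Finset.univ.erase j₀, c j * A i j :=
          (Finset.add_sum_erase _ _ (mem_univ j₀)).symm
        rw [hsplit]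
        linarith
    choose w hwabs hwsum using hlift
    set B : Matrix (Fin n) (Fin n) ℂ :=
      Matrix.of fun i j => if c j = 0 then ((A i j : ℝ) : ℂ) else w i j / ((c j : ℝ) : ℂ)
      with hBdef
    have hBentry : ∀ i j, B i j = if c j = 0 then ((A i j : ℝ) : ℂ)
        else w i j / ((c j : ℝ) : ℂ) := fun i j => rfl
    have hBabs : ∀ i j, ‖B i j‖ = A i j := by
      intro i j
      rw [hBentry]
      by_cases hcj : c j = 0
      · rw [if_pos hcj, Complex.norm_real, Real.norm_eq_abs, abs_of_nonneg (hA i j)]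
      · have hcjpos : 0 < c j := lt_of_le_of_ne (hc0 j) (Ne.symm hcj)
        rw [if_neg hcj, norm_div, hwabs i j, Complex.norm_real, Real.norm_eq_abs, abs_of_pos hcjpos]
        field_simp
    have hdet : B.det = 0 := by
      rw [← Matrix.exists_mulVec_eq_zero_iff]
      refine ⟨fun j => ((c j : ℝ) : ℂ), ?_, ?_⟩
      · intro h
        apply hcne
        funext j
        have := congrFun h j
        simpa using this
      · funext i
        show ∑ j, B i j * ((c j : ℝ) : ℂ) = 0
        rw [← hwsum i]
        apply Finset.sum_congr rfl
        intro j _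
        rw [hBentry]
        by_cases hcj : c j = 0
        · rw [if_pos hcj, hcj]
          have : ‖w i j‖ = 0 := by rw [hwabs i j, hcj, zero_mul]
          rw [norm_eq_zero.mp this]
          simp
        · rw [if_neg hcj, div_mul_cancel₀]
          exact_mod_cast hcj
    exact hB B hBabs hdet
  · -- if no polygon relation, all lifts nonsingular
    intro hno B hBabs
    intro hdet
    obtain ⟨v, hvne, hv⟩ := Matrix.exists_mulVec_eq_zero_iff.mpr hdet
    apply hno
    refine ⟨fun j => ‖v j‖, fun j => norm_nonneg _, ?_, ?_⟩
    · intro h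
      apply hvne
      funext j
      have := congrFun h j
      simp only [Pi.zero_apply] at this
      exact norm_eq_zero.mp this
    · intro i j₀
      have hrow : ∑ j, B i j * v j = 0 := congrFun hv i
      have hsplit : B i j₀ * v j₀ + ∑ j ∈ Finset.univ.erase j₀, B i j * v j = 0 := by
        have := (Finset.add_sum_erase univ (fun j => B i j * v j) (mem_univ j₀)).trans hrow
        simpa using this
      have habs : ∀ j, ‖B i j * v j‖ = ‖v j‖ * A i j := by
        intro j
        rw [norm_mul, hBabs i j, mul_comm]
      calc ‖v j₀‖ * A i j₀ = ‖B i j₀ * v j₀‖ := (habs j₀).symm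
        _ = ‖-∑ j ∈ Finset.univ.erase j₀, B i j * v j‖ := by
            rw [← eq_neg_of_add_eq_zero_left hsplit]
        _ = ‖∑ j ∈ Finset.univ.erase j₀, B i j * v j‖ :=
            norm_neg _
        _ ≤ ∑ j ∈ Finset.univ.erase j₀, ‖B i j * v j‖ :=
            norm_sum_le _ _
        _ = ∑ j ∈ Finset.univ.erase j₀, ‖v j‖ * A i j := by
            exact Finset.sum_congr rfl fun j _ => habs j
end

section
/- (Arav et al.) Let χ : Fin m → Fin n → SignType be a sign pattern. Then every matrix A : Matrix (Fin m) (Fin n) ℝ with SignType.sign (A i j) = χ i j for all i, j has rank A = n (equivalently, linearly independent columns) if and only if for every x : Fin n → SignType that is not identically zero there exists a row index i such that: (a) there exists j with χ i j * x j ≠ 0, and (b) all nonzero values among (χ i j * x j)_j are equal (all +1 or all −1). -/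
open Finset

private lemma signType_sign_coe (s : SignType) : SignType.sign ((s : ℝ)) = s := by
  cases s <;> simp

private lemma rank_full_iff {m n : ℕ} (A : Matrix (Fin m) (Fin n) ℝ) :
    A.rank = n ↔ ∀ v : Fin n → ℝ, A.mulVec v = 0 → v = 0 := by
  have h := A.mulVecLin.finrank_range_add_finrank_ker
  simp only [Module.finrank_fintype_fun_eq_card, Fintype.card_fin] at h
  rw [Matrix.rank]
  constructor
  · intro hr v hv
    have hk : Module.finrank ℝ (LinearMap.ker A.mulVecLin) = 0 := by omega
    rw [Submodule.finrank_eq_zero] at hk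
    have hmem : v ∈ LinearMap.ker A.mulVecLin := by
      simpa [Matrix.mulVecLin_apply] using hv
    simpa [hk] using hmem
  · intro hv
    have hk : LinearMap.ker A.mulVecLin = ⊥ :=
      LinearMap.ker_eq_bot'.2 fun v hveq => hv v (by simpa [Matrix.mulVecLin_apply] using hveq)
    rw [hk] at h
    simp at h
    omega

/-- (Arav et al.) Every real matrix with sign pattern `χ` has full column rank `n` iff for
every nonzero sign vector `x` some row `χ i` of `χ` is not orthogonal to `x` over the sign
hyperfield: the products `χ i j * x j` are not all zero, and all their nonzero values are
equal. -/
theorem sign_pattern_full_column_rank_iff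
    (m n : ℕ) (χ : Fin m → Fin n → SignType) :
    (∀ A : Matrix (Fin m) (Fin n) ℝ,
        (∀ i j, SignType.sign (A i j) = χ i j) → A.rank = n) ↔
    ∀ x : Fin n → SignType, x ≠ 0 → ∃ i,
      (∃ j, χ i j * x j ≠ 0) ∧
      ∀ j₁ j₂, χ i j₁ * x j₁ ≠ 0 → χ i j₂ * x j₂ ≠ 0 →
        χ i j₁ * x j₁ = χ i j₂ * x j₂ := by
  classical
  constructor
  · -- full rank for all realizations → combinatorial condition
    intro hA x hx
    by_contra hcon
    push_neg at hcon
    -- hcon : ∀ i, (∃ j, χ i j * x j ≠ 0) → ∃ j₁ j₂, _ ∧ _ ∧ _ ≠ _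
    set P : Fin m → Finset (Fin n) := fun i => univ.filter (fun j => χ i j * x j = 1) with hP
    set N : Fin m → Finset (Fin n) := fun i => univ.filter (fun j => χ i j * x j = -1) with hN
    have hmemP : ∀ i j, j ∈ P i ↔ χ i j * x j = 1 := by intro i j; simp [hP]
    have hmemN : ∀ i j, j ∈ N i ↔ χ i j * x j = -1 := by intro i j; simp [hN]
    have hne : ∀ i, (∃ j, χ i j * x j ≠ 0) → (P i).Nonempty ∧ (N i).Nonempty := by
      intro i hi
      obtain ⟨j₁, j₂, h1, h2, hne12⟩ := hcon i hi
      cases hc1 : (χ i j₁ * x j₁) with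
      | zero => exact absurd (by rw [hc1]; rfl) h1
      | neg =>
        cases hc2 : (χ i j₂ * x j₂) with
        | zero => exact absurd (by rw [hc2]; rfl) h2
        | neg => exact absurd (hc1.trans hc2.symm) hne12
        | pos =>
          exact ⟨⟨j₂, (hmemP i j₂).2 (by rw [hc2]; rfl)⟩,
                 ⟨j₁, (hmemN i j₁).2 (by rw [hc1]; rfl)⟩⟩
      | pos =>
        cases hc2 : (χ i j₂ * x j₂) with
        | zero => exact absurd (by rw [hc2]; rfl) h2
        | pos => exact absurd (hc1.trans hc2.symm) hne12
        | neg =>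
          exact ⟨⟨j₁, (hmemP i j₁).2 (by rw [hc1]; rfl)⟩,
                 ⟨j₂, (hmemN i j₂).2 (by rw [hc2]; rfl)⟩⟩
    -- construct a realization with a nontrivial kernel vector
    set A : Matrix (Fin m) (Fin n) ℝ := fun i j =>
      if χ i j * x j = 1 then ((N i).card : ℝ) * (χ i j : ℝ)
      else if χ i j * x j = -1 then ((P i).card : ℝ) * (χ i j : ℝ)
      else (χ i j : ℝ) with hAdef
    have hAij : ∀ i j, A i j =
        if χ i j * x j = 1 then ((N i).card : ℝ) * (χ i j : ℝ)
        else if χ i j * x j = -1 then ((P i).card : ℝ) * (χ i j : ℝ)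
        else (χ i j : ℝ) := fun i j => rfl
    have hApat : ∀ i j, SignType.sign (A i j) = χ i j := by
      intro i j
      rw [hAij]
      by_cases h1 : χ i j * x j = 1
      · have hNne : (N i).Nonempty := (hne i ⟨j, h1 ▸ one_ne_zero⟩).2
        have hcard : (0:ℝ) < (N i).card := by exact_mod_cast Finset.card_pos.2 hNne
        rw [if_pos h1, sign_mul, signType_sign_coe, sign_pos hcard, one_mul]
      · by_cases h2 : χ i j * x j = -1
        · have hPne : (P i).Nonempty := (hne i ⟨j, by rw [h2]; decide⟩).1
          have hcard : (0:ℝ) < (P i).card := by exact_mod_cast Finset.card_pos.2 hPne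
          rw [if_neg h1, if_pos h2, sign_mul, signType_sign_coe, sign_pos hcard, one_mul]
        · rw [if_neg h1, if_neg h2, signType_sign_coe]
    set v : Fin n → ℝ := fun j => ((x j : ℝ)) with hvdef
    have hker : A.mulVec v = 0 := by
      funext i
      have hterm : ∀ j, A i j * v j =
          (if j ∈ P i then ((N i).card : ℝ) else 0) +
          (if j ∈ N i then -((P i).card : ℝ) else 0) := by
        intro j
        have hcoe : (χ i j : ℝ) * (x j : ℝ) = ((χ i j * x j : SignType) : ℝ) :=
          (SignType.coe_mul _ _).symm
        rw [hAij, hvdef]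
        by_cases h1 : χ i j * x j = 1
        · have hmp : j ∈ P i := (hmemP i j).2 h1
          have hmn : j ∉ N i := fun hc => by
            have := ((hmemN i j).1 hc); rw [h1] at this; exact absurd this (by decide)
          rw [if_pos h1, if_pos hmp, if_neg hmn, mul_assoc, hcoe, h1]
          simp
        · by_cases h2 : χ i j * x j = -1
          · have hmn : j ∈ N i := (hmemN i j).2 h2
            have hmp : j ∉ P i := fun hc => by
              have := ((hmemP i j).1 hc); rw [h2] at this; exact absurd this (by decide)
            rw [if_neg h1, if_pos h2, if_pos hmn, if_neg hmp, mul_assoc, hcoe, h2]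
            simp
          · have h0 : χ i j * x j = 0 := by
              cases hc : (χ i j * x j) with
              | zero => rfl
              | pos => exact absurd (by rw [hc]; rfl) h1
              | neg => exact absurd (by rw [hc]; rfl) h2
            have hmp : j ∉ P i := fun hc => h1 ((hmemP i j).1 hc)
            have hmn : j ∉ N i := fun hc => h2 ((hmemN i j).1 hc)
            rw [if_neg h1, if_neg h2, if_neg hmp, if_neg hmn, hcoe, h0]
            simp
      have : (A.mulVec v) i = ∑ j, A i j * v j := by
        simp [Matrix.mulVec, dotProduct]
      rw [Pi.zero_apply, this]
      simp only [hterm]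
      rw [Finset.sum_add_distrib, Finset.sum_ite_mem, Finset.sum_ite_mem,
        Finset.univ_inter, Finset.univ_inter, Finset.sum_const, Finset.sum_const]
      simp only [nsmul_eq_mul, mul_neg]
      ring
    obtain ⟨j0, hj0⟩ : ∃ j, x j ≠ 0 := by
      by_contra hc; push_neg at hc; exact hx (funext hc)
    have hvne : v ≠ 0 := by
      intro h0
      apply hj0
      have := congrFun h0 j0
      rw [hvdef] at this
      cases hc : (x j0) with
      | zero => rfl
      | pos => simp [hc] at this
      | neg => simp [hc] at this
    exact hvne ((rank_full_iff A).1 (hA A hApat) v hker)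
  · -- combinatorial condition → full rank
    intro h A hpat
    rw [rank_full_iff]
    intro v hv
    by_contra hv0
    have hxv : ∃ j, v j ≠ 0 := by
      by_contra hc; push_neg at hc; exact hv0 (funext hc)
    obtain ⟨jv, hjv⟩ := hxv
    set x : Fin n → SignType := fun j => SignType.sign (v j) with hxdef
    have hx : x ≠ 0 := by
      intro h0
      exact hjv (sign_eq_zero_iff.1 (congrFun h0 jv))
    obtain ⟨i, ⟨j₀, hj₀⟩, hall⟩ := h x hx
    have hsgn : ∀ j, SignType.sign (A i j * v j) = χ i j * x j := fun j => by
      rw [sign_mul, hpat]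
    have hrow : ∑ j, A i j * v j = 0 := by
      have := congrFun hv i
      simpa [Matrix.mulVec, dotProduct] using this
    have hz : ∀ j, χ i j * x j = 0 → A i j * v j = 0 := fun j hj =>
      sign_eq_zero_iff.1 (by rw [hsgn j, hj])
    cases h0 : (χ i j₀ * x j₀) with
    | zero => exact hj₀ (by rw [h0]; rfl)
    | neg
    => -- all nonzero terms negative
      have h0 : χ i j₀ * x j₀ = -1 := by rw [h0]; rfl
      have hle : ∀ j ∈ univ, 0 ≤ -(A i j * v j) := by
        intro j _
        rcases eq_or_ne (χ i j * x j) 0 with hj | hj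
        · simp [hz j hj]
        · have : χ i j * x j = -1 := (hall j j₀ hj hj₀).trans h0
          have : A i j * v j < 0 := sign_eq_neg_one_iff.1 (by rw [hsgn j, this])
          linarith
      have hlt : ∃ j ∈ univ, 0 < -(A i j * v j) := by
        refine ⟨j₀, mem_univ _, ?_⟩
        have : A i j₀ * v j₀ < 0 := sign_eq_neg_one_iff.1 (by rw [hsgn j₀, h0])
        linarith
      have := Finset.sum_pos' hle hlt
      rw [Finset.sum_neg_distrib, hrow] at this
      simp at this
    | pos
    => -- all nonzero terms positive
      have h0 : χ i j₀ * x j₀ = 1 := by rw [h0]; rfl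
      have hle : ∀ j ∈ univ, 0 ≤ A i j * v j := by
        intro j _
        rcases eq_or_ne (χ i j * x j) 0 with hj | hj
        · simp [hz j hj]
        · have : χ i j * x j = 1 := (hall j j₀ hj hj₀).trans h0
          exact le_of_lt (sign_eq_one_iff.1 (by rw [hsgn j, this]))
      have hlt : ∃ j ∈ univ, 0 < A i j * v j :=
        ⟨j₀, mem_univ _, sign_eq_one_iff.1 (by rw [hsgn j₀, h0])⟩
      have := Finset.sum_pos' hle hlt
      rw [hrow] at this
      exact lt_irrefl _ this
end

section
/- Let K be a field with more than two elements and let χ : Fin n → Fin n → Prop be an n×n zero-nonzero pattern. Then every matrix A : Matrix (Fin n) (Fin n) K with zero-nonzero pattern χ (i.e., A i j ≠ 0 ↔ χ i j for all i, j) satisfies det A ≠ 0 if and only if there is no nonempty subset S ⊆ Fin n such that for every row i, the number of indices j ∈ S with χ i j is different from 1. -/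
/-- In a field where any two elements can be avoided, any finset of size at least two
supports a function with nonzero values summing to any prescribed target. -/
lemma exists_nonzero_sum_eq {K : Type*} [Field K]
    (hK3 : ∀ a b : K, ∃ x : K, x ≠ a ∧ x ≠ b) {ι : Type*} [DecidableEq ι] :
    ∀ T : Finset ι, 2 ≤ T.card → ∀ c : K,
      ∃ f : ι → K, (∀ j ∈ T, f j ≠ 0) ∧ ∑ j ∈ T, f j = c := by
  intro T
  induction T using Finset.strongInduction with
  | _ T ih =>
    intro hT c
    rcases eq_or_lt_of_le hT with h2 | h3
    · obtain ⟨a, b, hab, rfl⟩ := Finset.card_eq_two.mp h2.symm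
      obtain ⟨x, hx0, hxc⟩ := hK3 0 c
      refine ⟨fun j => if j = a then x else c - x, ?_, ?_⟩
      · intro j _
        by_cases h : j = a
        · simpa [h] using hx0
        · simpa [h] using sub_ne_zero.mpr (Ne.symm hxc)
      · rw [Finset.sum_pair hab]
        simp [hab.symm]
    · have hpos : 0 < T.card := by omega
      obtain ⟨a, ha⟩ := Finset.card_pos.mp hpos
      have hT' : 2 ≤ (T.erase a).card := by
        rw [Finset.card_erase_of_mem ha]; omega
      obtain ⟨f, hf, hsum⟩ := ih (T.erase a) (Finset.erase_ssubset ha) hT' (c - 1)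
      refine ⟨Function.update f a 1, ?_, ?_⟩
      · intro j hj
        by_cases h : j = a
        · rw [h, Function.update_self]; exact one_ne_zero
        · rw [Function.update_of_ne h]
          exact hf j (Finset.mem_erase.mpr ⟨h, hj⟩)
      · rw [← Finset.add_sum_erase T _ ha, Function.update_self]
        have : ∑ j ∈ T.erase a, Function.update f a 1 j = ∑ j ∈ T.erase a, f j :=
          Finset.sum_congr rfl fun j hj =>
            Function.update_of_ne (Finset.mem_erase.mp hj).1 _ _
        rw [this, hsum]; ring

/-- For a field `K` with more than two elements and a square zero-nonzero pattern `χ`, every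
matrix over `K` with zero-nonzero pattern `χ` is nonsingular iff no nonempty set `S` of
columns of `χ` is linearly dependent over the Krasner hyperfield, i.e. iff there is no
nonempty `S` such that every row has a number of nonzero positions in `S` different from
one. -/
theorem zero_nonzero_pattern_nonsingular_iff
    (K : Type*) [Field K] (hK : 2 < Cardinal.mk K) (n : ℕ)
    (χ : Fin n → Fin n → Prop) :
    (∀ A : Matrix (Fin n) (Fin n) K,
        (∀ i j, A i j ≠ 0 ↔ χ i j) → A.det ≠ 0) ↔
    ¬ ∃ S : Finset (Fin n), S.Nonempty ∧ ∀ i, {j | j ∈ S ∧ χ i j}.ncard ≠ 1 := by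
  classical
  have hK3 : ∀ a b : K, ∃ x : K, x ≠ a ∧ x ≠ b := by
    intro a b
    by_contra h
    push_neg at h
    have hsub : (Set.univ : Set K) ⊆ {a, b} := by
      intro x _
      by_cases hx : x = a
      · exact Or.inl hx
      · exact Or.inr (h x hx)
    have : Cardinal.mk K ≤ 2 := by
      calc Cardinal.mk K = Cardinal.mk (Set.univ : Set K) := Cardinal.mk_univ.symm
        _ ≤ Cardinal.mk ({a, b} : Set K) := Cardinal.mk_le_mk_of_subset hsub
        _ ≤ Cardinal.mk ({b} : Set K) + 1 := Cardinal.mk_insert_le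
        _ = 2 := by rw [Cardinal.mk_singleton]; norm_num
    exact absurd hK (not_lt.mpr this)
  constructor
  · intro hA
    rintro ⟨S, hS, hcol⟩
    set T : Fin n → Finset (Fin n) := fun i => S.filter (fun j => χ i j) with hTdef
    have hTcard : ∀ i, (T i).card ≠ 1 := by
      intro i
      have h := hcol i
      have : {j | j ∈ S ∧ χ i j} = ↑(T i) := by
        ext j; simp [hTdef]
      rwa [this, Set.ncard_coe_finset] at h
    -- choose values per row
    have hgex : ∀ i, ∃ g : Fin n → K,
        (2 ≤ (T i).card → (∀ j ∈ T i, g j ≠ 0) ∧ ∑ j ∈ T i, g j = 0) := by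
      intro i
      by_cases h : 2 ≤ (T i).card
      · obtain ⟨g, hg1, hg2⟩ := exists_nonzero_sum_eq hK3 (T i) h 0
        exact ⟨g, fun _ => ⟨hg1, hg2⟩⟩
      · exact ⟨fun _ => 1, fun h' => absurd h' h⟩
    choose g hg using hgex
    have hTalt : ∀ i, (T i) = ∅ ∨ 2 ≤ (T i).card := by
      intro i
      rcases Nat.lt_or_ge (T i).card 2 with h | h
      · left
        have := hTcard i
        rw [← Finset.card_eq_zero]
        omega
      · exact Or.inr h
    set A : Matrix (Fin n) (Fin n) K :=
      fun i j => if χ i j then (if j ∈ S then g i j else 1) else 0 with hAdef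
    have hpat : ∀ i j, A i j ≠ 0 ↔ χ i j := by
      intro i j
      by_cases hχ : χ i j
      · simp only [hAdef, if_pos hχ]
        refine iff_of_true ?_ hχ
        by_cases hjS : j ∈ S
        · rw [if_pos hjS]
          have hjT : j ∈ T i := Finset.mem_filter.mpr ⟨hjS, hχ⟩
          rcases hTalt i with h0 | h2
          · rw [h0] at hjT; simp at hjT
          · exact (hg i h2).1 j hjT
        · rw [if_neg hjS]; exact one_ne_zero
      · simp [hAdef, hχ]
    refine hA A hpat ?_
    rw [← Matrix.exists_mulVec_eq_zero_iff]
    refine ⟨fun j => if j ∈ S then (1 : K) else 0, ?_, ?_⟩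
    · obtain ⟨j0, hj0⟩ := hS
      intro h0
      have := congrFun h0 j0
      simp [hj0] at this
    · funext i
      show ∑ j, A i j * (if j ∈ S then (1 : K) else 0) = 0
      have h1 : ∀ j, A i j * (if j ∈ S then (1 : K) else 0)
          = if j ∈ S then A i j else 0 := by
        intro j; by_cases h : j ∈ S <;> simp [h]
      rw [Finset.sum_congr rfl fun j _ => h1 j, Finset.sum_ite_mem,
        Finset.univ_inter]
      have h2 : ∀ j ∈ S, A i j = if χ i j then g i j else 0 := by
        intro j hj; simp [hAdef, hj]
      rw [Finset.sum_congr rfl h2, ← Finset.sum_filter]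
      rcases hTalt i with h0 | hc2
      · rw [show S.filter (fun j => χ i j) = T i from rfl, h0, Finset.sum_empty]
      · exact (hg i hc2).2
  · intro hno A hpat hdet
    obtain ⟨v, hv0, hvA⟩ := Matrix.exists_mulVec_eq_zero_iff.mpr hdet
    apply hno
    refine ⟨Finset.univ.filter (fun j => v j ≠ 0), ?_, ?_⟩
    · obtain ⟨j, hj⟩ := Function.ne_iff.mp hv0
      exact ⟨j, Finset.mem_filter.mpr ⟨Finset.mem_univ j, hj⟩⟩
    · intro i hcard
      obtain ⟨j0, hj0⟩ := Set.ncard_eq_one.mp hcard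
      have hj0mem : j0 ∈ Finset.univ.filter (fun j => v j ≠ 0) ∧ χ i j0 := by
        have : j0 ∈ ({j0} : Set (Fin n)) := rfl
        rwa [← hj0] at this
      have hrow : ∑ j, A i j * v j = 0 := by
        have := congrFun hvA i
        simpa [Matrix.mulVec, dotProduct] using this
      have hsingle : ∑ j, A i j * v j = A i j0 * v j0 := by
        refine Finset.sum_eq_single j0 ?_ (fun h => absurd (Finset.mem_univ j0) h)
        intro j _ hne
        have hnot : ¬(j ∈ Finset.univ.filter (fun j => v j ≠ 0) ∧ χ i j) := by
          intro hmem
          have : j ∈ ({j0} : Set (Fin n)) := by rw [← hj0]; exact hmem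
          exact hne this
        by_cases hv : v j = 0
        · rw [hv, mul_zero]
        · have hχ : ¬ χ i j := fun hχ =>
            hnot ⟨Finset.mem_filter.mpr ⟨Finset.mem_univ j, hv⟩, hχ⟩
          have hA : A i j = 0 := by
            by_contra h
            exact hχ ((hpat i j).mp h)
          rw [hA, zero_mul]
      have hA0 : A i j0 ≠ 0 := (hpat i j0).mpr hj0mem.2
      have hv0' : v j0 ≠ 0 := (Finset.mem_filter.mp hj0mem.1).2
      rw [hsingle] at hrow
      exact mul_ne_zero hA0 hv0' hrow
end

section
/- Let K be an infinite field, let W be a linear subspace of Fin n → K, and let S be a set of vectors in W. Then there exists a vector w ∈ W whose support equals the union of the supports of the elements of S, i.e., {i : w i ≠ 0} = ⋃_{v ∈ S} {i : v i ≠ 0}. -/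
private lemma aux_list_support {K : Type*} [Field K] [Infinite K] {n : ℕ}
    (W : Submodule K (Fin n → K)) :
    ∀ L : List (Fin n → K), (∀ v ∈ L, v ∈ W) →
      ∃ w ∈ W, {i | w i ≠ 0} = ⋃ v ∈ L, {i | v i ≠ 0} := by
  intro L
  induction L with
  | nil =>
    intro _
    refine ⟨0, W.zero_mem, ?_⟩
    simp
  | cons v L ih =>
    classical
    intro h
    obtain ⟨w', hw'W, hw'⟩ := ih (fun u hu => h u (List.mem_cons_of_mem _ hu))
    have hvW : v ∈ W := h v List.mem_cons_self
    -- choose c avoiding bad values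
    set B : Finset K := insert 0 (Finset.image (fun i => -v i / w' i) Finset.univ) with hB
    obtain ⟨c, hc⟩ := Infinite.exists_notMem_finset B
    have hc0 : c ≠ 0 := fun h0 => hc (by simp [hB, h0])
    refine ⟨v + c • w', W.add_mem hvW (W.smul_mem c hw'W), ?_⟩
    have key : {i | (v + c • w') i ≠ 0} = {i | v i ≠ 0} ∪ {i | w' i ≠ 0} := by
      ext i
      simp only [Set.mem_setOf_eq, Set.mem_union, Pi.add_apply, Pi.smul_apply, smul_eq_mul]
      constructor
      · intro hne
        by_contra hcontra
        push_neg at hcontra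
        obtain ⟨h1, h2⟩ := hcontra
        simp [h1, h2] at hne
      · intro hor
        by_cases hw : w' i = 0
        · have hv : v i ≠ 0 := by
            rcases hor with h1 | h2
            · exact h1
            · exact absurd hw h2
          simpa [hw] using hv
        · intro heq
          apply hc
          have : c = -v i / w' i := by
            field_simp
            linear_combination heq
          rw [hB]
          apply Finset.mem_insert_of_mem
          simp only [Finset.mem_image]
          exact ⟨i, Finset.mem_univ i, this.symm⟩
    rw [key, hw']
    ext i
    simp [List.mem_cons, Set.mem_iUnion, or_and_right, exists_or]

/-- Over an infinite field, any subspace `W ≤ Kⁿ` contains a vector whose support is the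
union of the supports of any given set `S` of vectors of `W` (the key content of the fact
that `K → 𝕂` is an epic homomorphism to the Krasner hyperfield). -/
theorem exists_vector_support_eq_iUnion_supports
    (K : Type*) [Field K] [Infinite K] (n : ℕ)
    (W : Submodule K (Fin n → K)) (S : Set (Fin n → K)) (hS : ∀ v ∈ S, v ∈ W) :
    ∃ w ∈ W, {i | w i ≠ 0} = ⋃ v ∈ S, {i | v i ≠ 0} := by
  classical
  -- choose, for each index i, a witness vector in S nonzero at i (if any)
  let f : Fin n → (Fin n → K) := fun i =>
    if h : ∃ v ∈ S, v i ≠ 0 then h.choose else 0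
  have hfW : ∀ i, f i ∈ W := by
    intro i
    by_cases h : ∃ v ∈ S, v i ≠ 0
    · simp only [f, dif_pos h]
      exact hS _ h.choose_spec.1
    · simp only [f, dif_neg h]
      exact W.zero_mem
  let L : List (Fin n → K) := (List.finRange n).map f
  obtain ⟨w, hwW, hw⟩ := aux_list_support W L (by
    intro u hu
    simp only [L, List.mem_map] at hu
    obtain ⟨i, _, rfl⟩ := hu
    exact hfW i)
  refine ⟨w, hwW, ?_⟩
  rw [hw]
  ext i
  simp only [Set.mem_iUnion, Set.mem_setOf_eq, exists_prop]
  constructor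
  · rintro ⟨u, hu, hui⟩
    simp only [L, List.mem_map] at hu
    obtain ⟨j, _, rfl⟩ := hu
    by_cases h : ∃ v ∈ S, v j ≠ 0
    · refine ⟨h.choose, h.choose_spec.1, ?_⟩
      simpa only [f, dif_pos h] using hui
    · exfalso
      apply hui
      simp [f, dif_neg h]
  · rintro ⟨v, hv, hvi⟩
    have h : ∃ u ∈ S, u i ≠ 0 := ⟨v, hv, hvi⟩
    refine ⟨f i, ?_, ?_⟩
    · simp only [L, List.mem_map]
      exact ⟨i, List.mem_finRange i, rfl⟩
    · simp only [f, dif_pos h]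
      exact h.choose_spec.2
end

section
/- Let M be a matroid on ground set Fin n of rank r, and let χ : Fin m → Fin n → Prop be a zero-nonzero pattern such that for every row index i, the zero set {j : ¬ χ i j} is a flat of M. Then for every subset S ⊆ Fin n with |S| = r + 1, there exists a nonempty subset S' ⊆ S such that for every row i, the number of indices j ∈ S' with χ i j is different from 1. -/
/-- The rank of a matroid: the (common) cardinality of its bases. -/
noncomputable def Matroid.rankNat {α : Type*} (M : Matroid α) : ℕ :=
  sSup {k | ∃ B, M.IsBase B ∧ B.ncard = k}

/-- If the zero set of every row of a zero-nonzero pattern `χ` is a flat of a matroid `M` of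
rank `r` on the set of columns, then any `r + 1` columns of `χ` are linearly dependent over
the Krasner hyperfield: some nonempty subset `S'` of them is such that every row has a
number of nonzero positions in `S'` different from one. -/
theorem columns_dependent_over_krasner_of_flats
    (m n r : ℕ) (M : Matroid (Fin n)) (hE : M.E = Set.univ) (hr : M.rankNat = r)
    (χ : Fin m → Fin n → Prop) (hflat : ∀ i, M.IsFlat {j | ¬ χ i j}) :
    ∀ S : Finset (Fin n), S.card = r + 1 →
      ∃ S' : Finset (Fin n), S' ⊆ S ∧ S'.Nonempty ∧
        ∀ i, {j | j ∈ S' ∧ χ i j}.ncard ≠ 1 := by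
  classical
  intro S hS
  -- S is dependent
  have hSdep : M.Dep ↑S := by
    rw [Matroid.dep_iff]
    refine ⟨fun hind => ?_, by simp [hE]⟩
    obtain ⟨B, hB, hSB⟩ := hind.exists_isBase_superset
    have hBfin : B.Finite := Set.finite_univ.subset (by simp [← hE, hB.subset_ground])
    have hle : (S : Set (Fin n)).ncard ≤ B.ncard := Set.ncard_le_ncard hSB hBfin
    have hBr : B.ncard ≤ r := by
      rw [← hr, Matroid.rankNat]
      exact le_csSup ⟨n, fun k ⟨B', hB', hk⟩ => hk ▸
        le_trans (Set.ncard_le_ncard (Set.subset_univ B') Set.finite_univ)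
          (by simp [Set.ncard_univ])⟩ ⟨B, hB, rfl⟩
    rw [Set.ncard_coe_finset, hS] at hle
    omega
  -- take a minimal dependent subset C of S
  obtain ⟨C, hCmem, hCmin⟩ := Finset.exists_min_image
    ((S.powerset).filter (fun T : Finset (Fin n) => M.Dep (T : Set (Fin n)))) (fun T => T.card)
    ⟨S, by simp [hSdep]⟩
  simp only [Finset.mem_filter, Finset.mem_powerset] at hCmem
  obtain ⟨hCS, hCdep⟩ := hCmem
  have hmin : ∀ T : Finset (Fin n), T ⊂ C → M.Indep ↑T := by
    intro T hT
    by_contra hTi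
    have hTdep : M.Dep ↑T := by
      rw [Matroid.dep_iff]; exact ⟨hTi, by simp [hE]⟩
    have := hCmin T (by simp [Finset.mem_filter, Finset.mem_powerset,
      hT.subset.trans hCS, hTdep])
    exact absurd (Finset.card_lt_card hT) (by omega)
  refine ⟨C, hCS, ?_, ?_⟩
  · rcases C.eq_empty_or_nonempty with h | h
    · exact absurd (h ▸ hCdep : M.Dep (↑(∅ : Finset (Fin n))))
        (by simpa using M.empty_indep.not_dep)
    · exact h
  · intro i hone
    obtain ⟨e, he⟩ := Set.ncard_eq_one.mp hone
    have heC : e ∈ C ∧ χ i e := by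
      have : e ∈ {j | j ∈ C ∧ χ i j} := he ▸ rfl
      exact this
    have hsub : (↑(C.erase e) : Set (Fin n)) ⊆ {j | ¬ χ i j} := by
      intro j hj
      simp only [Finset.coe_erase, Set.mem_diff, Finset.mem_coe, Set.mem_singleton_iff] at hj
      intro hχ
      have : j ∈ {j | j ∈ C ∧ χ i j} := ⟨hj.1, hχ⟩
      rw [he] at this
      exact hj.2 this
    have hI : M.Indep ↑(C.erase e) := hmin _ (Finset.erase_ssubset heC.1)
    have heC' : e ∈ M.closure ↑(C.erase e) := by
      have : M.Dep (insert e ↑(C.erase e)) := by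
        rwa [← Finset.coe_insert, Finset.insert_erase heC.1]
      rw [hI.insert_dep_iff] at this
      exact this.1
    have : e ∈ {j | ¬ χ i j} := by
      have hcl : M.closure ↑(C.erase e) ⊆ {j | ¬ χ i j} :=
        (hflat i).closure ▸ M.closure_subset_closure hsub
      exact hcl heC'
    exact this heC.2
end

section
/- For any vectors X, Y : Fin n → ℝ there exists ε > 0 such that for every index i, SignType.sign (X i + ε * Y i) equals SignType.sign (X i) if X i ≠ 0, and equals SignType.sign (Y i) if X i = 0. -/
/-- For vectors `X, Y ∈ ℝⁿ` and all sufficiently small `ε > 0`, the sign vector of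
`X + ε • Y` is the conformal composition of the sign vectors of `X` and `Y`. -/
theorem exists_eps_sign_add_eq_conformal_composition
    (n : ℕ) (X Y : Fin n → ℝ) :
    ∃ ε : ℝ, 0 < ε ∧ ∀ i,
      (X i ≠ 0 → SignType.sign (X i + ε * Y i) = SignType.sign (X i)) ∧
      (X i = 0 → SignType.sign (X i + ε * Y i) = SignType.sign (Y i)) := by
  have h : ∀ᶠ ε : ℝ in nhdsWithin 0 (Set.Ioi 0), ∀ i,
      (X i ≠ 0 → SignType.sign (X i + ε * Y i) = SignType.sign (X i)) ∧
      (X i = 0 → SignType.sign (X i + ε * Y i) = SignType.sign (Y i)) := by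
    refine Filter.eventually_all.2 fun i => Filter.Eventually.and ?_ ?_
    · by_cases hX : X i = 0
      · filter_upwards with ε hne; exact absurd hX hne
      · have hc : Filter.Tendsto (fun ε : ℝ => X i + ε * Y i) (nhdsWithin 0 (Set.Ioi 0))
            (nhds (X i)) := by
          have : Filter.Tendsto (fun ε : ℝ => X i + ε * Y i) (nhds 0) (nhds (X i + 0 * Y i)) := by
            exact (continuous_const.add (continuous_id.mul continuous_const)).tendsto 0
          simpa using this.mono_left nhdsWithin_le_nhds
        rcases lt_or_gt_of_ne hX with hlt | hlt
        · have := hc.eventually (eventually_lt_nhds hlt)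
          filter_upwards [this] with ε hε _
          rw [sign_neg hε, sign_neg hlt]
        · have := hc.eventually (eventually_gt_nhds hlt)
          filter_upwards [this] with ε hε _
          rw [sign_pos hε, sign_pos hlt]
    · filter_upwards [self_mem_nhdsWithin] with ε (hε : (0:ℝ) < ε) hX
      rw [hX, zero_add, sign_mul, sign_pos hε, one_mul]
  obtain ⟨ε, hε, hprop⟩ := ((eventually_mem_nhdsWithin (a := (0:ℝ)) (s := Set.Ioi 0)).and h).exists
  exact ⟨ε, hε, hprop⟩
end

section
/- Let W be a linear subspace of Fin n → ℝ and let x, y ∈ W. Then there exists z ∈ W such that for every index i, SignType.sign (z i) equals SignType.sign (x i) if x i ≠ 0, and equals SignType.sign (y i) if x i = 0. In other words, the set of sign vectors of elements of W is closed under conformal composition. -/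
lemma sign_add_of_abs_lt {a b : ℝ} (h : |b| < |a|) :
    SignType.sign (a + b) = SignType.sign a := by
  rcases lt_trichotomy a 0 with ha | ha | ha
  · rw [sign_neg ha, sign_neg]
    rw [abs_of_neg ha] at h
    linarith [neg_abs_le b, le_abs_self b]
  · simp [ha] at h; exact absurd h (abs_nonneg b).not_gt
  · rw [sign_pos ha, sign_pos]
    rw [abs_of_pos ha] at h
    linarith [neg_abs_le b, le_abs_self b]

/-- The set of sign vectors of elements of a linear subspace `W ≤ ℝⁿ` is closed under
conformal composition: for `x, y ∈ W` there is `z ∈ W` whose sign vector is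
`sign x ∘ sign y` (key step in showing `sign : ℝ → 𝕊` is epic). -/
theorem exists_mem_sign_eq_conformal_composition
    (n : ℕ) (W : Submodule ℝ (Fin n → ℝ)) (x y : Fin n → ℝ)
    (hx : x ∈ W) (hy : y ∈ W) :
    ∃ z ∈ W, ∀ i,
      (x i ≠ 0 → SignType.sign (z i) = SignType.sign (x i)) ∧
      (x i = 0 → SignType.sign (z i) = SignType.sign (y i)) := by
  set c : ℝ := 1 + ∑ i, if x i = 0 then 0 else |y i| / |x i| with hc
  have hsum : ∀ i, (if x i = 0 then (0:ℝ) else |y i| / |x i|)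
      ≤ ∑ j, if x j = 0 then (0:ℝ) else |y j| / |x j| := fun i =>
    Finset.single_le_sum (f := fun j => if x j = 0 then (0:ℝ) else |y j| / |x j|)
      (fun j _ => by positivity) (Finset.mem_univ i)
  refine ⟨c • x + y, W.add_mem (W.smul_mem c hx) hy, fun i => ?_⟩
  constructor
  · intro hxi
    have hxabs : 0 < |x i| := abs_pos.mpr hxi
    have hlt : |y i| < c * |x i| := by
      have := hsum i
      rw [if_neg hxi] at this
      have h1 : |y i| / |x i| < c := by
        have : (0:ℝ) < 1 := one_pos
        linarith [hsum i, (if_neg hxi : (if x i = 0 then (0:ℝ) else |y i| / |x i|) = |y i| / |x i|)]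
      calc |y i| = |y i| / |x i| * |x i| := by field_simp
        _ < c * |x i| := by exact mul_lt_mul_of_pos_right h1 hxabs
    have hc0 : 0 < c := by
      have : (0:ℝ) ≤ ∑ j, if x j = 0 then (0:ℝ) else |y j| / |x j| :=
        Finset.sum_nonneg fun j _ => by positivity
      rw [hc]; linarith
    have : SignType.sign (c * x i + y i) = SignType.sign (c * x i) := by
      apply sign_add_of_abs_lt
      rwa [abs_mul, abs_of_pos hc0]
    simpa [sign_mul, sign_pos hc0] using this
  · intro hxi
    simp [hxi]
end

section
/- Let K be an infinite field and let X, Y : Fin n → LaurentSeries K be vectors of formal Laurent series. Then there exists a nonzero a ∈ K such that for every index i with X i and Y i not both zero, the series X i + a • Y i is nonzero and its order equals the minimum of the orders of the nonzero series among X i and Y i (i.e., it equals min((X i).order, (Y i).order) when both are nonzero, (X i).order when Y i = 0, and (Y i).order when X i = 0). -/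
private lemma order_eq_of_coeff (K : Type*) [Field K] {f : LaurentSeries K} {d : ℤ}
    (h : f.coeff d ≠ 0) (h' : ∀ j < d, f.coeff j = 0) : f.order = d := by
  refine le_antisymm (HahnSeries.order_le_of_coeff_ne_zero h) ?_
  by_contra hlt
  exact (HahnSeries.coeff_order_eq_zero.not.mpr (HahnSeries.ne_zero_of_coeff_ne_zero h))
    (h' _ (lt_of_not_ge hlt))

/-- Given vectors `X, Y` of formal Laurent series over an infinite field `K`, there is a
nonzero scalar `a ∈ K` such that entrywise the order of `X i + a • Y i` is the minimum of
the orders of `X i` and `Y i` (key step in showing that the valuation map to the tropical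
hyperfield is epic). -/
theorem exists_scalar_order_add_smul_eq_min
    (K : Type*) [Field K] [Infinite K] (n : ℕ) (X Y : Fin n → LaurentSeries K) :
    ∃ a : K, a ≠ 0 ∧ ∀ i, (X i ≠ 0 ∨ Y i ≠ 0) →
      (X i + a • Y i ≠ 0 ∧
        (X i ≠ 0 → Y i ≠ 0 → (X i + a • Y i).order = min (X i).order (Y i).order) ∧
        (Y i = 0 → (X i + a • Y i).order = (X i).order) ∧
        (X i = 0 → (X i + a • Y i).order = (Y i).order)) := by
  classical
  set bad : Finset K :=
    insert 0 (Finset.image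
      (fun i => -((X i).coeff (min (X i).order (Y i).order)) /
        ((Y i).coeff (min (X i).order (Y i).order))) Finset.univ) with hbad
  obtain ⟨a, ha⟩ := Infinite.exists_notMem_finset bad
  have ha0 : a ≠ 0 := fun h => ha (by simp [hbad, h])
  refine ⟨a, ha0, fun i hi => ?_⟩
  rcases eq_or_ne (Y i) 0 with hY | hY
  · have hX : X i ≠ 0 := hi.resolve_right (fun h => h hY)
    have hZ : X i + a • Y i = X i := by rw [hY, smul_zero, add_zero]
    rw [hZ]
    exact ⟨hX, fun _ h => absurd hY h, fun _ => rfl, fun h => absurd h hX⟩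
  rcases eq_or_ne (X i) 0 with hX | hX
  · have hZ : X i + a • Y i ≠ 0 := by
      simp only [hX, zero_add]
      exact smul_ne_zero ha0 hY
    refine ⟨hZ, fun h _ => absurd hX h, fun h => absurd h hY, fun _ => ?_⟩
    have : (X i + a • Y i).order = (Y i).order := by
      refine order_eq_of_coeff K ?_ ?_
      · simp only [hX, zero_add, HahnSeries.coeff_smul, smul_eq_mul]
        exact mul_ne_zero ha0 ((HahnSeries.coeff_order_eq_zero.not.mpr hY))
      · intro j hj
        simp [hX, HahnSeries.coeff_smul, HahnSeries.coeff_eq_zero_of_lt_order hj]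
    exact this
  -- both nonzero
  set d : ℤ := min (X i).order (Y i).order with hd
  have hcoeff : (X i + a • Y i).coeff d = (X i).coeff d + a * (Y i).coeff d := by
    simp [HahnSeries.coeff_smul]
  have hne : (X i).coeff d + a * (Y i).coeff d ≠ 0 := by
    rcases eq_or_ne ((Y i).coeff d) 0 with hYd | hYd
    · have hdX : d = (X i).order := by
        rcases min_cases (X i).order (Y i).order with ⟨h1, _⟩ | ⟨h1, h2⟩
        · exact h1
        · exfalso
          exact (HahnSeries.coeff_order_eq_zero.not.mpr hY) (by rw [← h1]; exact hYd)
      rw [hYd, mul_zero, add_zero, hdX]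
      exact (HahnSeries.coeff_order_eq_zero.not.mpr hX)
    · intro h
      have : a = -((X i).coeff d) / ((Y i).coeff d) := by
        rw [eq_div_iff hYd]
        linear_combination h
      apply ha
      rw [hbad]
      exact Finset.mem_insert_of_mem (Finset.mem_image.2 ⟨i, Finset.mem_univ i, this.symm⟩)
  have hZcoeff : (X i + a • Y i).coeff d ≠ 0 := by rw [hcoeff]; exact hne
  have horder : (X i + a • Y i).order = d := by
    refine order_eq_of_coeff K hZcoeff ?_
    intro j hj
    have h1 : (X i).coeff j = 0 :=
      HahnSeries.coeff_eq_zero_of_lt_order (lt_of_lt_of_le hj (min_le_left _ _))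
    have h2 : (Y i).coeff j = 0 :=
      HahnSeries.coeff_eq_zero_of_lt_order (lt_of_lt_of_le hj (min_le_right _ _))
    simp [HahnSeries.coeff_smul, h1, h2]
  exact ⟨HahnSeries.ne_zero_of_coeff_ne_zero hZcoeff, fun _ _ => horder,
    fun h => absurd h hY, fun h => absurd h hX⟩
end
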